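/- arXiv:1110.0189 — 5 statements merged into one kernel-verified Lean document; each statement's English description precedes it below -/
import Mathlib

section
/- Define Ψ on words on {1,2} by Ψ(1^{m_0} 2^{n_0} 1^{m_1} 2^{n_1} ⋯ 1^{m_d} 2^{n_d}) = 1^{m_0} 2 1^{m_1−1} 2 ⋯ 2 1^{m_d−1} 2^{n_0−1} 1 2^{n_1−1} ⋯ 2^{n_{d−1}−1} 1 2^{n_d} (this is Φ₁^{-1} restricted to binary words). Then for every word ω on {1,2}, des(ω) = exc(Ψ(ω)). -/
/-- Count the leading letters of a list equal to `a`; return the count and the rest. -/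
def leadCount (a : ℕ) : List ℕ → ℕ × List ℕ
  | [] => (0, [])
  | b :: rest =>
    if b = a then
      let p := leadCount a rest
      (p.1 + 1, p.2)
    else (0, b :: rest)

def blocksAux : ℕ → List ℕ → List (ℕ × ℕ)
  | 0, _ => []
  | _, [] => []
  | fuel + 1, w =>
    let p := leadCount 1 w
    let q := leadCount 2 p.2
    (p.1, q.1) :: blocksAux fuel q.2

/-- The descent-block decomposition `[(m₀,n₀),…,(m_d,n_d)]` of a binary word
`1^{m₀} 2^{n₀} ⋯ 1^{m_d} 2^{n_d}`. -/
def blocks (w : List ℕ) : List (ℕ × ℕ) := blocksAux w.length w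

/-- The word `1^{m₀} 2^{n₀} ⋯ 1^{m_d} 2^{n_d}` determined by blocks. -/
def blockWord (bs : List (ℕ × ℕ)) : List ℕ :=
  bs.flatMap fun p => List.replicate p.1 1 ++ List.replicate p.2 2

/-- `[(m₀,n₀),…,(m_d,n_d)]` is a valid descent-block decomposition:
`m_i > 0` for `1 ≤ i ≤ d` and `n_j > 0` for `0 ≤ j ≤ d-1`. -/
def ValidBlocks (bs : List (ℕ × ℕ)) : Prop :=
  bs ≠ [] ∧ (∀ p ∈ bs.tail, 0 < p.1) ∧ (∀ p ∈ bs.dropLast, 0 < p.2)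

/-- A word on the alphabet {1,2}. -/
def IsBinary (w : List ℕ) : Prop := ∀ a ∈ w, a = 1 ∨ a = 2

/-- The descent number of a word. -/
def des (w : List ℕ) : ℕ := (w.zip w.tail).countP fun p => decide (p.2 < p.1)

/-- The excedance number of a binary word with `k` ones: the number of
positions `i ≤ k` carrying the letter 2. -/
def exc (w : List ℕ) : ℕ := (w.take (w.count 1)).count 2

/-- `Ψ = Φ₁⁻¹` on binary words, via the descent-block decomposition. -/
def psiBlocks (bs : List (ℕ × ℕ)) : List ℕ :=
  List.replicate (bs.headD (0,0)).1 1
    ++ bs.tail.flatMap (fun p => 2 :: List.replicate (p.1 - 1) 1)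
    ++ bs.dropLast.flatMap (fun p => List.replicate (p.2 - 1) 2 ++ [1])
    ++ List.replicate (bs.getLastD (0,0)).2 2

def Psi (w : List ℕ) : List ℕ := psiBlocks (blocks w)

/-- Foata's second fundamental transformation on binary words. -/
def phi2Blocks (bs : List (ℕ × ℕ)) : List ℕ :=
  bs.tail.reverse.flatMap (fun p => List.replicate (p.1 - 1) 1 ++ [2])
    ++ List.replicate (bs.headD (0,0)).1 1
    ++ bs.dropLast.flatMap (fun p => List.replicate (p.2 - 1) 2 ++ [1])
    ++ List.replicate (bs.getLastD (0,0)).2 2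

def Phi2 (w : List ℕ) : List ℕ := phi2Blocks (blocks w)

/-- The extended Steingrímsson map `Γ` on binary words. -/
def gammaBlocks (bs : List (ℕ × ℕ)) : List ℕ :=
  match bs with
  | [] => []
  | [(m0, n0)] => List.replicate m0 1 ++ List.replicate n0 2
  | (m0, n0) :: rest =>
      List.replicate m0 1
        ++ rest.dropLast.flatMap (fun p => 2 :: List.replicate (p.1 - 1) 1)
        ++ (2 :: List.replicate (rest.getLastD (0,0)).1 1)
        ++ (let ns := n0 :: rest.map Prod.snd
            ns.dropLast.dropLast.flatMap (fun nj => List.replicate (nj - 1) 2 ++ [1])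
              ++ List.replicate (ns.dropLast.getLastD 0 - 1 + ns.getLastD 0) 2)

def Gamma (w : List ℕ) : List ℕ := gammaBlocks (blocks w)

/-- The involution `φ` on binary words. -/
def phi (w : List ℕ) : List ℕ :=
  let bs := blocks w
  let ns := bs.map Prod.snd
  let newms : List ℕ :=
    match (bs.map Prod.fst).reverse with
    | [] => []
    | [a] => [a]
    | a :: rest => (a - 1) :: (rest.dropLast ++ [rest.getLastD 0 + 1])
  blockWord (newms.zip ns)

/-- Fibonacci words: binary words with no two consecutive ones. -/
def IsFib (w : List ℕ) : Prop :=
  IsBinary w ∧ w.Chain' fun a b => ¬(a = 1 ∧ b = 1)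

def FibSet (n : ℕ) : Set (List ℕ) := {w | IsFib w ∧ w.length = n}

/-- Fibonacci words of length `n` ending with the letter 1. -/
def FibSet' (n : ℕ) : Set (List ℕ) :=
  {w | IsFib w ∧ w.length = n ∧ w.getLast? = some 1}

/-- Binary words of length `n` with no two consecutive twos. -/
def GSet (n : ℕ) : Set (List ℕ) :=
  {w | IsBinary w ∧ w.length = n ∧ w.Chain' fun a b => ¬(a = 2 ∧ b = 2)}

/-- The word `1^{m₀} 2^{d+n₀-1} 1 2^{n₁-1} ⋯ 1 2^{n_{d-1}-1} 1 2^{n_d}`. -/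
def Rword (m0 : ℕ) (ns : List ℕ) : List ℕ :=
  match ns with
  | [] => List.replicate m0 1
  | [n0] => List.replicate m0 1 ++ List.replicate n0 2
  | n0 :: rest =>
      List.replicate m0 1 ++ List.replicate (rest.length + n0 - 1) 2
        ++ rest.dropLast.flatMap (fun nj => 1 :: List.replicate (nj - 1) 2)
        ++ (1 :: List.replicate (rest.getLastD 0) 2)

def RSet (n : ℕ) : Set (List ℕ) :=
  {w | ∃ m0 ns, m0 ≤ 1 ∧ ns ≠ [] ∧ (∀ j ∈ List.dropLast ns, 1 ≤ j) ∧
        w = Rword m0 ns ∧ w.length = n}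

/-- The Fibonacci word `1^{m₀} 2^{n₀} 1 2^{n₁} ⋯ 1 2^{n_d}`. -/
def Fword (m0 : ℕ) (ns : List ℕ) : List ℕ :=
  List.replicate m0 1 ++ List.replicate (ns.headD 0) 2
    ++ ns.tail.flatMap fun nj => 1 :: List.replicate nj 2

-- AUX
lemma leadCount_eq (a : ℕ) (w : List ℕ) :
    leadCount a w = ((w.takeWhile (· = a)).length, w.dropWhile (· = a)) := by
  induction w with
  | nil => rfl
  | cons b rest ih =>
    by_cases h : b = a <;>
      simp [leadCount, h, ih, List.takeWhile_cons, List.dropWhile_cons]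

lemma des_cons (c : ℕ) (w : List ℕ) :
    des (c :: w) = des w + (w.head?.elim 0 fun h => if h < c then 1 else 0) := by
  cases w with
  | nil => simp [des]
  | cons h t => simp [des, List.countP_cons]

lemma des_rep1 (a : ℕ) (x : List ℕ) (hx : ∀ h, x.head? = some h → 0 < h) :
    des (List.replicate a 1 ++ x) = des x := by
  induction a with
  | zero => simp
  | succ n ih =>
    rw [List.replicate_succ, List.cons_append, des_cons, ih]
    cases n with
    | zero =>
      simp only [List.replicate_zero, List.nil_append]
      cases hh : x.head? with
      | none => simp
      | some h => have := hx h hh; simp [hh]; omega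
    | succ m => simp [List.replicate_succ]

lemma des_rep2_nil (b : ℕ) : des (List.replicate b 2) = 0 := by
  induction b with
  | zero => simp [des]
  | succ n ih =>
    rw [List.replicate_succ, des_cons, ih]
    cases n <;> simp [List.replicate_succ]

lemma des_rep2 (b : ℕ) (x : List ℕ) (hx : x.head? = some 1) :
    des (List.replicate (b+1) 2 ++ x) = des x + 1 := by
  induction b with
  | zero =>
    rw [List.replicate_succ, List.replicate_zero, List.cons_append, List.nil_append,
      des_cons, hx]
    simp
  | succ n ih =>
    rw [List.replicate_succ, List.cons_append, des_cons, ih]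
    simp [List.replicate_succ]

lemma binary_dropWhile (p : ℕ → Bool) {w : List ℕ} (hw : IsBinary w) :
    IsBinary (w.dropWhile p) :=
  fun a ha => hw a ((List.dropWhile_sublist p (l := w)).mem ha)

lemma q2_len {c : ℕ} {t : List ℕ} (hc : c = 1 ∨ c = 2) :
    (((c :: t).dropWhile (· = 1)).dropWhile (· = 2)).length ≤ t.length := by
  rcases hc with h | h <;> subst h
  · rw [List.dropWhile_cons]
    simp only [decide_true, if_true]
    exact le_trans ((List.dropWhile_sublist _).length_le) ((List.dropWhile_sublist _).length_le)
  · rw [List.dropWhile_cons]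
    norm_num
    exact (List.dropWhile_sublist _).length_le

lemma blocksAux_succ (fuel : ℕ) (c : ℕ) (t : List ℕ) :
    blocksAux (fuel+1) (c::t) =
      (((c::t).takeWhile (· = 1)).length,
       ((((c::t).dropWhile (· = 1))).takeWhile (· = 2)).length)
        :: blocksAux fuel (((c::t).dropWhile (· = 1)).dropWhile (· = 2)) := by
  simp [blocksAux, leadCount_eq]

lemma blocksAux_stable : ∀ fuel (w : List ℕ), IsBinary w → w.length ≤ fuel →
    blocksAux fuel w = blocks w := by
  intro fuel
  induction fuel using Nat.strong_induction_on with
  | _ fuel ih =>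
    intro w hw hl
    match fuel, w with
    | 0, w =>
      have : w = [] := List.length_eq_zero_iff.mp (Nat.le_zero.mp hl)
      subst this; rfl
    | fuel+1, [] => rfl
    | fuel+1, c::t =>
      have hc : c = 1 ∨ c = 2 := hw c (List.mem_cons_self)
      set r := ((c :: t).dropWhile (· = 1)).dropWhile (· = 2) with hr
      have hrb : IsBinary r := binary_dropWhile _ (binary_dropWhile _ hw)
      have hrl : r.length ≤ t.length := q2_len hc
      have hfuel : t.length ≤ fuel := by simpa using hl
      rw [blocksAux_succ, show blocks (c::t) = blocksAux (t.length+1) (c::t) by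
        simp [blocks], blocksAux_succ, ← hr,
        ih fuel (Nat.lt_succ_self _) r hrb (le_trans hrl hfuel),
        ih t.length (Nat.lt_succ_of_le hfuel) r hrb hrl]

lemma head?_dropWhile (p : ℕ → Bool) : ∀ (l : List ℕ) {x : ℕ},
    (l.dropWhile p).head? = some x → p x = false := by
  intro l
  induction l with
  | nil => simp
  | cons a t ih =>
    intro x h
    rw [List.dropWhile_cons] at h
    by_cases hp : p a
    · rw [if_pos hp] at h
      exact ih h
    · rw [if_neg hp] at h
      simp only [List.head?_cons, Option.some.injEq] at h
      subst h
      exact Bool.eq_false_iff.mpr hp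

lemma blocks_cons {w : List ℕ} (hw : IsBinary w) (hne : w ≠ []) :
    ∃ a b r, blocks w = (a, b) :: blocks r ∧
      w = List.replicate a 1 ++ List.replicate b 2 ++ r ∧
      IsBinary r ∧ r.length < w.length ∧
      (r = [] ∨ (0 < b ∧ r.head? = some 1)) := by
  obtain ⟨c, t, rfl⟩ := List.exists_cons_of_ne_nil hne
  have hc : c = 1 ∨ c = 2 := hw c (List.mem_cons_self)
  set p2 := (c :: t).dropWhile (· = 1) with hp2
  set r := p2.dropWhile (· = 2) with hr
  have hp2b : IsBinary p2 := binary_dropWhile _ hw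
  have hrb : IsBinary r := binary_dropWhile _ hp2b
  have hrl : r.length ≤ t.length := q2_len hc
  refine ⟨(( (c::t)).takeWhile (· = 1)).length, (p2.takeWhile (· = 2)).length, r,
    ?_, ?_, hrb, by simpa using Nat.lt_succ_of_le hrl, ?_⟩
  · rw [show blocks (c::t) = blocksAux (t.length+1) (c::t) by simp [blocks],
      blocksAux_succ, ← hp2, ← hr, blocksAux_stable t.length r hrb hrl]
  · have h1 : (c::t).takeWhile (· = 1) = List.replicate ((( (c::t)).takeWhile (· = 1)).length) 1 := by
      rw [List.eq_replicate_iff]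
      exact ⟨rfl, fun b hb => by simpa using List.mem_takeWhile_imp hb⟩
    have h2 : p2.takeWhile (· = 2) = List.replicate ((p2.takeWhile (· = 2)).length) 2 := by
      rw [List.eq_replicate_iff]
      exact ⟨rfl, fun b hb => by simpa using List.mem_takeWhile_imp hb⟩
    conv_lhs => rw [← List.takeWhile_append_dropWhile (p := (· = 1)) (l := c::t), ← hp2,
      ← List.takeWhile_append_dropWhile (p := (· = 2)) (l := p2), ← hr]
    rw [← h1, ← h2, List.append_assoc]
  · by_cases hrnil : r = []
    · exact Or.inl hrnil
    · obtain ⟨x, t', hx⟩ := List.exists_cons_of_ne_nil hrnil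
      have hxh : r.head? = some x := by rw [hx]; rfl
      have hx2 : ¬ (x = 2) := by
        have := head?_dropWhile (· = 2) p2 (hr ▸ hxh)
        simpa using this
      have hx1 : x = 1 := by
        rcases hrb x (hx ▸ List.mem_cons_self) with h | h
        · exact h
        · exact absurd h hx2
      refine Or.inr ⟨?_, by rw [hxh, hx1]⟩
      by_contra hb
      push_neg at hb
      have htw : p2.takeWhile (· = 2) = [] := List.length_eq_zero_iff.mp (Nat.le_zero.mp hb)
      have hp2r : p2 = r := by
        conv_lhs => rw [← List.takeWhile_append_dropWhile (p := (· = 2)) (l := p2)]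
        rw [htw, List.nil_append, hr]
      have : ¬ (x = 1) := by
        have := head?_dropWhile (· = 1) (c::t)
          (show ((c::t).dropWhile (· = 1)).head? = some x by rw [← hp2, hp2r, hxh])
        simpa using this
      exact this hx1

lemma blocks_ne_nil {w : List ℕ} (hw : IsBinary w) (hne : w ≠ []) : blocks w ≠ [] := by
  obtain ⟨a, b, r, h, -⟩ := blocks_cons hw hne
  simp [h]

lemma des_blocks : ∀ n (w : List ℕ), w.length ≤ n → IsBinary w → w ≠ [] →
    des w + 1 = (blocks w).length := by
  intro n
  induction n with
  | zero => intro w hl _ hne; exact absurd (List.length_eq_zero_iff.mp (Nat.le_zero.mp hl)) hne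
  | succ n ih =>
    intro w hl hw hne
    obtain ⟨a, b, r, hb, hweq, hrb, hrl, hcase⟩ := blocks_cons hw hne
    rcases hcase with rfl | ⟨hbpos, hrh⟩
    · have hdes : des w = 0 := by
        rw [hweq, List.append_nil, des_rep1, des_rep2_nil]
        intro h hh
        cases b with
        | zero => simp at hh
        | succ m =>
          rw [List.replicate_succ] at hh
          simp at hh
          omega
      rw [hdes, hb]
      simp [blocks, blocksAux]
    · obtain ⟨b', rfl⟩ := Nat.exists_eq_succ_of_ne_zero (Nat.pos_iff_ne_zero.mp hbpos)
      have hrne : r ≠ [] := by intro h; rw [h] at hrh; simp at hrh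
      have : des w = des r + 1 := by
        rw [hweq, List.append_assoc, des_rep1, des_rep2 b' r hrh]
        intro h hh
        rw [List.replicate_succ, List.cons_append] at hh
        simp at hh
        omega
      rw [this, hb, List.length_cons,
        ← ih r (by omega) hrb hrne]

lemma count1_B (t : List (ℕ × ℕ)) :
    (t.flatMap fun p => 2 :: List.replicate (p.1 - 1) 1).count 1 + t.length
      = (t.flatMap fun p => 2 :: List.replicate (p.1 - 1) 1).length := by
  induction t with
  | nil => simp
  | cons h t ih => simp [List.count_cons, List.count_append, List.count_replicate] at *; omega

lemma count2_B (t : List (ℕ × ℕ)) :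
    (t.flatMap fun p => 2 :: List.replicate (p.1 - 1) 1).count 2 = t.length := by
  induction t with
  | nil => simp
  | cons h t ih => simp [List.count_cons, List.count_append, List.count_replicate, ih]

lemma count1_C (l : List (ℕ × ℕ)) :
    (l.flatMap fun p => List.replicate (p.2 - 1) 2 ++ [1]).count 1 = l.length := by
  induction l with
  | nil => simp
  | cons h t ih => simp [List.count_cons, List.count_append, List.count_replicate, ih]

lemma exc_psi (h : ℕ × ℕ) (t : List (ℕ × ℕ)) :
    exc (psiBlocks (h :: t)) = t.length := by
  set A := List.replicate h.1 1 with hA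
  set B := t.flatMap (fun p => 2 :: List.replicate (p.1 - 1) 1) with hB
  set C := (h :: t).dropLast.flatMap (fun p => List.replicate (p.2 - 1) 2 ++ [1]) with hC
  set D := List.replicate (((h :: t)).getLastD (0,0)).2 2 with hD
  have hw : psiBlocks (h :: t) = (A ++ B) ++ (C ++ D) := by
    rw [psiBlocks]
    simp only [List.headD_cons, List.tail_cons, List.append_assoc, hA, hB, hC, hD]
  have hcount : (psiBlocks (h :: t)).count 1 = (A ++ B).length := by
    rw [hw]
    simp only [List.count_append, List.length_append]
    have h1 : A.count 1 = A.length := by simp [hA, List.count_replicate]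
    have h2 : B.count 1 + t.length = B.length := by
      rw [hB]; exact count1_B t
    have h3 : C.count 1 = t.length := by
      rw [hC, count1_C]; simp
    have h4 : D.count 1 = 0 := by simp [hD, List.count_replicate]
    omega
  rw [exc, hcount, hw, List.take_left' rfl, List.count_append]
  have : A.count 2 = 0 := by simp [hA, List.count_replicate]
  rw [this, hB, count2_B]
  simp


theorem stmt_4 (w : List ℕ) (hw : IsBinary w) :
    des w = exc (Psi w) := by
  by_cases hne : w = []
  · subst hne; rfl
  · obtain ⟨p, t, hb⟩ := List.exists_cons_of_ne_nil (blocks_ne_nil hw hne)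
    have h1 := des_blocks w.length w le_rfl hw hne
    rw [hb, List.length_cons] at h1
    rw [Psi, hb, exc_psi]
    omega
end

section
/- Let F_n be the set of Fibonacci words of length n (binary words on {1,2} with no two consecutive ones), and let R_n be the set of binary words of length n of the form 1^{m_0} 2^{d + n_0 − 1} 1 2^{n_1 − 1} ⋯ 1 2^{n_{d−1} − 1} 1 2^{n_d} with m_0 ∈ {0,1}, n_j ≥ 1 for 0 ≤ j ≤ d−1, and n_d ≥ 0. Then Ψ(F_n) = R_n, where Ψ is the restriction of the inverse of Foata's first transformation to binary words, and consequently for every k, #{ω ∈ F_n : des(ω) = k} = #{w ∈ R_n : exc(w) = k}. -/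
namespace Aux

def U (rs : List ℕ) : List ℕ := rs.flatMap fun r => 1 :: List.replicate r 2

lemma U_nil : U [] = [] := rfl

lemma U_cons (r : ℕ) (rs : List ℕ) : U (r :: rs) = 1 :: (List.replicate r 2 ++ U rs) := by
  simp [U]

lemma U_head_ne_two (rs : List ℕ) : (U rs).head? ≠ some 2 := by
  cases rs with
  | nil => simp [U]
  | cons r rs => simp [U_cons]

lemma U_head (rs : List ℕ) : rs = [] ∨ (U rs).head? = some 1 := by
  cases rs with
  | nil => exact Or.inl rfl
  | cons r rs => right; simp [U_cons]

lemma U_length (rs : List ℕ) : (U rs).length = rs.length + rs.sum := by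
  induction rs with
  | nil => simp [U]
  | cons r rs ih => simp [U_cons, ih]; omega

lemma leadCount_not_head {a : ℕ} {w : List ℕ} (h : w.head? ≠ some a) : leadCount a w = (0, w) := by
  cases w with
  | nil => rfl
  | cons b t =>
    have : b ≠ a := by simpa using h
    simp [leadCount, this]

lemma leadCount_rep_append {a : ℕ} (n : ℕ) {t : List ℕ} (h : t.head? ≠ some a) :
    leadCount a (List.replicate n a ++ t) = (n, t) := by
  induction n with
  | zero => simpa using leadCount_not_head h
  | succ n ih => simp [List.replicate_succ, leadCount, ih]

lemma blocksAux_U : ∀ rs fuel, (∀ j ∈ rs.dropLast, 1 ≤ j) → (U rs).length ≤ fuel →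
    blocksAux fuel (U rs) = rs.map fun n => (1, n) := by
  intro rs
  induction rs with
  | nil => intro fuel _ _; cases fuel <;> rfl
  | cons r rs ih =>
    intro fuel hv hlen
    rw [U_cons] at hlen ⊢
    obtain ⟨f, rfl⟩ : ∃ f, fuel = f + 1 := by
      cases fuel with
      | zero => simp at hlen
      | succ f => exact ⟨f, rfl⟩
    have hhead : (List.replicate r 2 ++ U rs).head? ≠ some 1 := by
      cases r with
      | zero =>
        have : rs = [] := by
          by_contra hne
          have : 1 ≤ 0 := hv 0 (by simp [List.dropLast_cons_of_ne_nil hne])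
          omega
        simp [this, U_nil]
      | succ r => simp [List.replicate_succ]
    have h1 : leadCount 1 (1 :: (List.replicate r 2 ++ U rs))
        = (1, List.replicate r 2 ++ U rs) := by
      have := leadCount_rep_append (a := 1) 1 hhead
      simpa using this
    have h2 : leadCount 2 (List.replicate r 2 ++ U rs) = (r, U rs) :=
      leadCount_rep_append r (U_head_ne_two rs)
    have hv' : ∀ j ∈ rs.dropLast, 1 ≤ j := by
      intro j hj
      apply hv
      rcases rs with _ | ⟨x, xs⟩
      · simp at hj
      · simp [List.dropLast_cons_of_ne_nil (List.cons_ne_nil x xs)]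
        exact Or.inr hj
    have hlen' : (U rs).length ≤ f := by
      simp at hlen; omega
    simp only [blocksAux, h1, h2]
    rw [ih f hv' hlen']
    simp

def runsAux : ℕ → List ℕ → List ℕ
  | 0, _ => []
  | _ + 1, [] => []
  | f + 1, _ :: w => (leadCount 2 w).1 :: runsAux f (leadCount 2 w).2

lemma runsAux_U : ∀ rs fuel, (U rs).length ≤ fuel → runsAux fuel (U rs) = rs := by
  intro rs
  induction rs with
  | nil => intro fuel _; cases fuel <;> rfl
  | cons r rs ih =>
    intro fuel hlen
    rw [U_cons] at hlen ⊢
    obtain ⟨f, rfl⟩ : ∃ f, fuel = f + 1 := by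
      cases fuel with
      | zero => simp at hlen
      | succ f => exact ⟨f, rfl⟩
    have h2 : leadCount 2 (List.replicate r 2 ++ U rs) = (r, U rs) :=
      leadCount_rep_append r (U_head_ne_two rs)
    have hlen' : (U rs).length ≤ f := by simp at hlen; omega
    simp only [runsAux, h2, ih f hlen']

def decodeR (w : List ℕ) : ℕ × List ℕ :=
  let p := leadCount 1 w
  let q := leadCount 2 p.2
  let rs := runsAux q.2.length q.2
  if rs = [] then (p.1, [q.1])
  else (p.1, (q.1 + 1 - rs.length) :: (rs.dropLast.map (· + 1) ++ [rs.getLastD 0]))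


lemma des_cons (a : ℕ) (w : List ℕ) :
    des (a :: w) = des w + (if w.head?.getD a < a then 1 else 0) := by
  cases w with
  | nil => simp [des]
  | cons b t =>
    simp [des, List.countP_cons]
    congr

lemma des_rep_append {a : ℕ} {w : List ℕ} (h : ¬ (w.head?.getD a < a)) (n : ℕ) :
    des (List.replicate n a ++ w) = des w := by
  induction n with
  | zero => simp
  | succ n ih =>
    rw [List.replicate_succ, List.cons_append, des_cons, ih]
    cases n with
    | zero => simp [h]
    | succ n => simp [List.replicate_succ]

lemma des_nil : des [] = 0 := rfl

lemma des_rep (a n : ℕ) : des (List.replicate n a) = 0 := by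
  have := des_rep_append (a := a) (w := []) (by simp) n
  simpa [des_nil] using this

lemma rep2_head {n : ℕ} (h : 1 ≤ n) (w : List ℕ) :
    (List.replicate n 2 ++ w).head? = some 2 := by
  cases n with
  | zero => omega
  | succ n => simp [List.replicate_succ]

lemma des_rep2_append_one {n : ℕ} {w : List ℕ} (hn : 1 ≤ n) (h : w.head? = some 1) :
    des (List.replicate n 2 ++ w) = 1 + des w := by
  induction n with
  | zero => omega
  | succ n ih =>
    rw [List.replicate_succ, List.cons_append, des_cons]
    cases n with
    | zero => simp [h, Nat.add_comm]
    | succ n =>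
      rw [ih (by omega), rep2_head (by omega)]
      simp

lemma U_head_one {r : ℕ} {rs : List ℕ} : (U (r :: rs)).head? = some 1 := by
  simp [U_cons]

lemma valid_tail {r : ℕ} {rs : List ℕ} (hv : ∀ j ∈ (r :: rs).dropLast, 1 ≤ j) :
    ∀ j ∈ rs.dropLast, 1 ≤ j := by
  intro j hj
  apply hv
  rcases rs with _ | ⟨x, xs⟩
  · simp at hj
  · rw [List.dropLast_cons_of_ne_nil (List.cons_ne_nil x xs)]
    exact List.mem_cons_of_mem _ hj

lemma valid_head {r : ℕ} {rs : List ℕ} (hne : rs ≠ [])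
    (hv : ∀ j ∈ (r :: rs).dropLast, 1 ≤ j) : 1 ≤ r := by
  apply hv
  rw [List.dropLast_cons_of_ne_nil hne]
  exact List.mem_cons_self

lemma des_U : ∀ rs : List ℕ, ∀ n : ℕ, 1 ≤ n → (∀ j ∈ rs.dropLast, 1 ≤ j) →
    des (List.replicate n 2 ++ U rs) = rs.length := by
  intro rs
  induction rs with
  | nil => intro n _ _; simp [U, des_rep]
  | cons r rs ih =>
    intro n hn hv
    rw [U_cons, des_rep2_append_one hn (by simp), des_cons]
    have hif : ¬ ((List.replicate r 2 ++ U rs).head?.getD 1 < 1) := by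
      cases r with
      | zero =>
        rcases rs with _ | ⟨y, ys⟩
        · simp [U]
        · have := valid_head (List.cons_ne_nil y ys) hv
          omega
      | succ r => simp [List.replicate_succ]
    rw [if_neg hif]
    rcases rs with _ | ⟨y, ys⟩
    · simp [U, des_rep]
    · rw [ih r (valid_head (List.cons_ne_nil y ys) hv) (valid_tail hv)]
      simp [Nat.add_comm]

lemma fword_eq (m0 n0 : ℕ) (rest : List ℕ) :
    Fword m0 (n0 :: rest) = List.replicate m0 1 ++ (List.replicate n0 2 ++ U rest) := by
  simp [Fword, U]

lemma dropLast_map {α β : Type} (f : α → β) : ∀ l : List α, (l.map f).dropLast = l.dropLast.map f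
  | [] => by simp
  | [a] => by simp
  | a :: b :: l => by
    simp only [List.map_cons, List.dropLast_cons₂, List.map_cons]
    rw [← List.map_cons (f := f) (a := b) (l := l), dropLast_map f (b :: l)]

lemma rword_eq (m0 n0 : ℕ) (r : ℕ) (rest' : List ℕ) :
    Rword m0 (n0 :: r :: rest') = List.replicate m0 1
      ++ (List.replicate ((r :: rest').length + n0 - 1) 2
      ++ U ((r :: rest').dropLast.map (· - 1) ++ [(r :: rest').getLastD 0])) := by
  simp [Rword, U, List.flatMap_append, dropLast_map]
  rw [← List.map_cons (f := fun x => x - 1) (a := r) (l := rest'), dropLast_map, List.flatMap_map]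

lemma des_fword {m0 n0 : ℕ} {rest : List ℕ}
    (hv : ∀ j ∈ (n0 :: rest).dropLast, 1 ≤ j) :
    des (Fword m0 (n0 :: rest)) = rest.length := by
  rw [fword_eq]
  have hcond : ¬ ((List.replicate n0 2 ++ U rest).head?.getD 1 < 1) := by
    cases n0 with
    | zero =>
      rcases rest with _ | ⟨y, ys⟩
      · simp [U]
      · simp [U_cons]
    | succ n0 => simp [List.replicate_succ]
  rw [des_rep_append hcond m0]
  rcases rest with _ | ⟨y, ys⟩
  · simp [U, des_rep]
  · exact des_U (y :: ys) n0 (valid_head (List.cons_ne_nil y ys) hv) (valid_tail hv)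

lemma count_U_one (rs : List ℕ) : (U rs).count 1 = rs.length := by
  induction rs with
  | nil => simp [U]
  | cons r rs ih => simp [U_cons, ih, List.count_replicate]

lemma count_U_two (rs : List ℕ) : (U rs).count 2 = rs.sum := by
  induction rs with
  | nil => simp [U]
  | cons r rs ih => simp [U_cons, ih, List.count_replicate]

lemma exc_rword {m0 n0 : ℕ} {rest : List ℕ}
    (hv : ∀ j ∈ (n0 :: rest).dropLast, 1 ≤ j) :
    exc (Rword m0 (n0 :: rest)) = rest.length := by
  rcases rest with _ | ⟨y, ys⟩
  · have h : Rword m0 [n0] = List.replicate m0 1 ++ List.replicate n0 2 := by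
      simp [Rword]
    rw [exc, h]
    have hc : (List.replicate m0 1 ++ List.replicate n0 2).count 1 = m0 := by
      simp [List.count_replicate]
    rw [hc, List.take_append]
    simp [List.take_replicate, List.count_replicate]
  · have hn0 : 1 ≤ n0 := hv n0 (by
      rw [List.dropLast_cons_of_ne_nil (List.cons_ne_nil y ys)]
      exact List.mem_cons_self)
    rw [exc, rword_eq]
    set rs : List ℕ := (y :: ys).dropLast.map (· - 1) ++ [(y :: ys).getLastD 0] with hrs
    have hrslen : rs.length = (y :: ys).length := by
      simp [hrs]
    have hc : (List.replicate m0 1 ++ (List.replicate ((y :: ys).length + n0 - 1) 2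
        ++ U rs)).count 1 = m0 + (y :: ys).length := by
      simp [List.count_replicate, count_U_one, hrslen]
    rw [hc]
    have hL : (y :: ys).length ≤ (y :: ys).length + n0 - 1 := by omega
    rw [List.take_append, List.take_append]
    simp only [List.take_replicate, List.length_replicate]
    rw [List.count_append, List.count_append]
    have h1 : min (m0 + (y :: ys).length) m0 = m0 := by omega
    have h2 : min (m0 + (y :: ys).length - m0) ((y :: ys).length + n0 - 1)
        = (y :: ys).length := by omega
    have h3 : m0 + (y :: ys).length - m0 - ((y :: ys).length + n0 - 1) = 0 := by omega
    rw [h1, h2, h3]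
    simp [List.count_replicate]

lemma chain'_rep2 (n : ℕ) :
    List.Chain' (fun a b => ¬(a = 1 ∧ b = 1)) (List.replicate n 2) := by
  induction n with
  | zero => simp [List.Chain']
  | succ n ih =>
    rw [List.replicate_succ, List.Chain', List.isChain_cons]
    exact ⟨fun y _ => by omega, ih⟩

lemma chain'_U : ∀ rs : List ℕ, (∀ j ∈ rs.dropLast, 1 ≤ j) →
    List.Chain' (fun a b => ¬(a = 1 ∧ b = 1)) (U rs) := by
  intro rs
  induction rs with
  | nil => simp [U, List.Chain']
  | cons r rs ih =>
    intro hv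
    rw [U_cons, List.Chain', List.isChain_cons]
    constructor
    · intro y hy
      cases r with
      | zero =>
        rcases rs with _ | ⟨x, xs⟩
        · simp [U] at hy
        · have := valid_head (List.cons_ne_nil x xs) hv
          omega
      | succ r =>
        rw [rep2_head (by omega)] at hy
        simp at hy
        omega
    · rw [List.isChain_append]
      refine ⟨chain'_rep2 r, ih (valid_tail hv), ?_⟩
      intro x hx y _
      have : x = 2 := by
        have := List.mem_of_mem_getLast? hx
        exact (List.eq_of_mem_replicate this)
      omega

lemma chain'_rep2_U (n : ℕ) (rs : List ℕ) (hv : ∀ j ∈ rs.dropLast, 1 ≤ j) :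
    List.Chain' (fun a b => ¬(a = 1 ∧ b = 1)) (List.replicate n 2 ++ U rs) := by
  rw [List.Chain', List.isChain_append]
  refine ⟨chain'_rep2 n, chain'_U rs hv, ?_⟩
  intro x hx y _
  have : x = 2 := List.eq_of_mem_replicate (List.mem_of_mem_getLast? hx)
  omega

lemma isFib_fword {m0 n0 : ℕ} {rest : List ℕ} (hm : m0 ≤ 1)
    (hv : ∀ j ∈ (n0 :: rest).dropLast, 1 ≤ j) :
    IsFib (Fword m0 (n0 :: rest)) := by
  constructor
  · intro a ha
    rw [fword_eq] at ha
    simp only [List.mem_append, U, List.mem_flatMap, List.mem_cons,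
      List.mem_replicate] at ha
    rcases ha with (h | (h | ⟨x, _, (h | h)⟩)) <;> omega
  · rw [fword_eq]
    interval_cases m0
    · simpa using chain'_rep2_U n0 rest (valid_tail hv)
    · have : List.replicate 1 1 = [1] := rfl
      rw [this, List.singleton_append, List.Chain', List.isChain_cons]
      refine ⟨?_, chain'_rep2_U n0 rest (valid_tail hv)⟩
      intro y hy
      cases n0 with
      | zero =>
        rcases rest with _ | ⟨x, xs⟩
        · simp [U] at hy
        · have := valid_head (List.cons_ne_nil x xs) hv
          omega
      | succ n0 =>
        rw [rep2_head (by omega)] at hy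
        simp at hy
        omega

lemma fib_repr : ∀ w : List ℕ, IsFib w →
    ∃ m0 ns, m0 ≤ 1 ∧ ns ≠ [] ∧ (∀ j ∈ ns.dropLast, 1 ≤ j) ∧ w = Fword m0 ns := by
  intro w
  induction w with
  | nil => exact fun _ => ⟨0, [0], by omega, by simp, by simp, by simp [Fword, U]⟩
  | cons a w ih =>
    intro hf
    obtain ⟨hb, hc⟩ := hf
    have hfw : IsFib w := ⟨fun x hx => hb x (List.mem_cons_of_mem _ hx), hc.tail⟩
    obtain ⟨m0, ns, hm, hne, hv, rfl⟩ := ih hfw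
    obtain ⟨n0, rest, rfl⟩ := List.exists_cons_of_ne_nil hne
    rcases hb a (List.mem_cons_self) with rfl | rfl
    · have hm0 : m0 = 0 := by
        by_contra h
        have h1 : m0 = 1 := by omega
        subst h1
        have hh : (Fword 1 (n0 :: rest)).head? = some 1 := by
          rw [fword_eq]
          rfl
        exact (List.isChain_cons.mp hc).1 1 hh ⟨rfl, rfl⟩
      subst hm0
      refine ⟨1, n0 :: rest, le_refl 1, by simp, hv, ?_⟩
      rw [fword_eq, fword_eq]
      simp
    · rcases Nat.le_one_iff_eq_zero_or_eq_one.mp hm with rfl | rfl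
      · refine ⟨0, (n0 + 1) :: rest, by omega, by simp, ?_, ?_⟩
        · intro j hj
          rcases rest with _ | ⟨x, xs⟩
          · simp at hj
          · rw [List.dropLast_cons_of_ne_nil (List.cons_ne_nil x xs)] at hj
            rcases List.mem_cons.mp hj with rfl | hj'
            · omega
            · exact valid_tail hv j hj'
        · rw [fword_eq, fword_eq]
          simp [List.replicate_succ]
      · refine ⟨0, 1 :: n0 :: rest, by omega, by simp, ?_, ?_⟩
        · intro j hj
          rw [List.dropLast_cons_of_ne_nil (List.cons_ne_nil n0 rest)] at hj
          rcases List.mem_cons.mp hj with rfl | hj'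
          · omega
          · exact hv j hj'
        · rw [fword_eq, fword_eq]
          simp [U_cons, List.replicate_succ]

lemma U_eq_nil {rs : List ℕ} (h : U rs = []) : rs = [] := by
  cases rs with
  | nil => rfl
  | cons r rs => simp [U_cons] at h

lemma blocksAux_step (f : ℕ) (w : List ℕ) (hw : w ≠ []) :
    blocksAux (f + 1) w = ((leadCount 1 w).1, (leadCount 2 (leadCount 1 w).2).1)
      :: blocksAux f (leadCount 2 (leadCount 1 w).2).2 := by
  cases w with
  | nil => exact absurd rfl hw
  | cons b t => rfl

lemma blocks_fword {m0 n0 : ℕ} {rest : List ℕ}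
    (hv : ∀ j ∈ (n0 :: rest).dropLast, 1 ≤ j) (hpos : 0 < m0 + n0 + rest.length) :
    blocks (Fword m0 (n0 :: rest)) = (m0, n0) :: rest.map fun n => (1, n) := by
  have hn0 : rest = [] ∨ 1 ≤ n0 := by
    rcases rest with _ | ⟨x, xs⟩
    · exact Or.inl rfl
    · exact Or.inr (valid_head (List.cons_ne_nil x xs) hv)
  have hmn : 1 ≤ m0 + n0 := by
    rcases hn0 with rfl | h
    · simp at hpos; omega
    · omega
  rw [blocks, fword_eq]
  have hlen : (List.replicate m0 1 ++ (List.replicate n0 2 ++ U rest)).length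
      = m0 + n0 + (U rest).length := by simp; omega
  have hne : List.replicate m0 1 ++ (List.replicate n0 2 ++ U rest) ≠ [] := by
    intro h
    rw [← List.length_eq_zero_iff] at h
    omega
  obtain ⟨f, hf⟩ : ∃ f, (List.replicate m0 1 ++ (List.replicate n0 2 ++ U rest)).length
      = f + 1 := ⟨(List.replicate m0 1 ++ (List.replicate n0 2 ++ U rest)).length - 1,
        by omega⟩
  rw [hf, blocksAux_step f _ hne]
  have hhead : (List.replicate n0 2 ++ U rest).head? ≠ some 1 := by
    rcases hn0 with rfl | h
    · cases n0 with
      | zero => simp [U]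
      | succ n0 => simp [rep2_head (Nat.succ_le_succ (Nat.zero_le n0))]
    · simp [rep2_head h]
  rw [leadCount_rep_append m0 hhead, leadCount_rep_append n0 (U_head_ne_two rest)]
  rw [blocksAux_U rest f (valid_tail hv) (by omega)]

lemma shift (g : ℕ → List ℕ) : ∀ (l : List ℕ) (t : List ℕ),
    1 :: (l.flatMap (fun n => g n ++ [1]) ++ t) = l.flatMap (fun n => 1 :: g n) ++ (1 :: t) := by
  intro l
  induction l with
  | nil => intro t; simp
  | cons a l ih =>
    intro t
    simp only [List.flatMap_cons, List.append_assoc, List.singleton_append, List.cons_append,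
      List.nil_append]
    rw [ih t]

lemma flatMap_pair_two (rest : List ℕ) :
    (rest.map fun n => (1, n)).flatMap (fun p => 2 :: List.replicate (p.1 - 1) 1)
      = List.replicate rest.length 2 := by
  induction rest with
  | nil => simp
  | cons r rs ih => simp [ih, List.replicate_succ]

lemma getLast?_map' {α β : Type} (f : α → β) : ∀ l : List α,
    (l.map f).getLast? = l.getLast?.map f
  | [] => by simp
  | [a] => by simp
  | a :: b :: l => by
    rw [List.map_cons, List.map_cons, List.getLast?_cons_cons, List.getLast?_cons_cons,
      ← List.map_cons (f := f) (a := b) (l := l), getLast?_map' f (b :: l)]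

lemma psi_fword {m0 n0 : ℕ} {rest : List ℕ} (hm : m0 ≤ 1)
    (hv : ∀ j ∈ (n0 :: rest).dropLast, 1 ≤ j) :
    Psi (Fword m0 (n0 :: rest)) = Rword m0 (n0 :: rest) := by
  by_cases hpos : 0 < m0 + n0 + rest.length
  · rw [Psi, blocks_fword hv hpos]
    rcases rest with _ | ⟨r, rest'⟩
    · simp [psiBlocks, Rword]
    · have hn0 : 1 ≤ n0 := valid_head (List.cons_ne_nil r rest') hv
      rw [rword_eq]
      have hlast : ((m0, n0) :: ((r :: rest').map fun n => (1, n))).getLastD (0, 0)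
          = (1, (r :: rest').getLastD 0) := by
        rw [List.getLastD_eq_getLast?, List.getLastD_eq_getLast?]
        rw [List.map_cons, List.getLast?_cons_cons, ← List.map_cons (a := r) (l := rest'),
          getLast?_map' _ (r :: rest')]
        rw [List.getLast?_eq_getLast (List.cons_ne_nil r rest')]
        simp
      have hdrop : ((m0, n0) :: ((r :: rest').map fun n => (1, n))).dropLast
          = (m0, n0) :: ((r :: rest').dropLast.map fun n => (1, n)) := by
        rw [List.dropLast_cons_of_ne_nil (by simp), dropLast_map]
      rw [psiBlocks]
      simp only [List.headD_cons, List.tail_cons, hdrop, hlast, flatMap_pair_two]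
      rw [List.flatMap_cons]
      have hU : U ((r :: rest').dropLast.map (· - 1) ++ [(r :: rest').getLastD 0])
          = (r :: rest').dropLast.flatMap (fun n => 1 :: List.replicate (n - 1) 2)
            ++ (1 :: List.replicate ((r :: rest').getLastD 0) 2) := by
        rw [U, List.flatMap_append, List.flatMap_map]
        simp [U]
      rw [hU]
      have hflat : ((r :: rest').dropLast.map fun n => (1, n)).flatMap
          (fun p => List.replicate (p.2 - 1) 2 ++ [1])
          = (r :: rest').dropLast.flatMap fun n => List.replicate (n - 1) 2 ++ [1] := by
        rw [List.flatMap_map]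
      rw [hflat]
      have hrep : List.replicate ((r :: rest').length) 2 ++ List.replicate (n0 - 1) 2
          = List.replicate ((r :: rest').length + n0 - 1) 2 := by
        rw [← List.replicate_add]
        congr 1
        omega
      have hshift := shift (fun n => List.replicate (n - 1) 2) (r :: rest').dropLast
        (List.replicate ((r :: rest').getLastD 0) 2)
      have harith : (r :: rest').length + n0 - 1 = (r :: rest').length + (n0 - 1) := by
        omega
      rw [harith, List.replicate_add]
      simp only [List.append_assoc, List.cons_append, List.singleton_append,
        List.nil_append]
      rw [hshift]
  · have h0 : m0 = 0 ∧ n0 = 0 ∧ rest = [] := by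
      constructor
      · omega
      constructor
      · omega
      · rw [← List.length_eq_zero_iff]; omega
    obtain ⟨rfl, rfl, rfl⟩ := h0
    simp [Psi, Fword, blocks, blocksAux, psiBlocks, Rword, U]

lemma dropLast_concat_getLastD {l : List ℕ} (h : l ≠ []) :
    l.dropLast ++ [l.getLastD 0] = l := by
  rw [List.getLastD_eq_getLast?, List.getLast?_eq_getLast h]
  simp [List.dropLast_append_getLast]

lemma sum_map_sub_one : ∀ l : List ℕ, (∀ x ∈ l, 1 ≤ x) →
    (l.map (· - 1)).sum + l.length = l.sum := by
  intro l
  induction l with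
  | nil => simp
  | cons a l ih =>
    intro h
    have ha : 1 ≤ a := h a (List.mem_cons_self)
    have := ih (fun x hx => h x (List.mem_cons_of_mem _ hx))
    simp only [List.map_cons, List.sum_cons, List.length_cons]
    omega

lemma length_rword_eq {m0 n0 : ℕ} {rest : List ℕ}
    (hv : ∀ j ∈ (n0 :: rest).dropLast, 1 ≤ j) :
    (Rword m0 (n0 :: rest)).length = (Fword m0 (n0 :: rest)).length := by
  rcases rest with _ | ⟨r, rest'⟩
  · simp [Rword, fword_eq, U]
  · have hn0 : 1 ≤ n0 := valid_head (List.cons_ne_nil r rest') hv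
    have hvr : ∀ j ∈ (r :: rest').dropLast, 1 ≤ j := valid_tail hv
    rw [rword_eq, fword_eq]
    have hsum : (r :: rest').dropLast.sum + (r :: rest').getLastD 0 = (r :: rest').sum := by
      have h := congrArg List.sum (dropLast_concat_getLastD (List.cons_ne_nil r rest'))
      simpa using h
    have hlen : (r :: rest').dropLast.length + 1 = (r :: rest').length := by
      have h := congrArg List.length (dropLast_concat_getLastD (List.cons_ne_nil r rest'))
      simpa using h
    have hmap := sum_map_sub_one (r :: rest').dropLast hvr
    simp only [List.length_append, List.length_replicate, U_length, List.length_map,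
      List.sum_append, List.sum_cons, List.sum_nil, List.length_cons, List.length_nil]
    simp only [List.sum_append, List.sum_cons, List.sum_nil] at hsum ⊢
    omega

lemma runsAux_zero (w : List ℕ) : runsAux 0 w = [] := rfl

lemma decode_rword {m0 n0 : ℕ} {rest : List ℕ} (hm : m0 ≤ 1)
    (hv : ∀ j ∈ (n0 :: rest).dropLast, 1 ≤ j) :
    decodeR (Rword m0 (n0 :: rest)) = (m0, n0 :: rest) := by
  rcases rest with _ | ⟨r, rest'⟩
  · have h : Rword m0 [n0] = List.replicate m0 1 ++ List.replicate n0 2 := by simp [Rword]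
    rw [h, decodeR]
    have hhead : (List.replicate n0 2).head? ≠ some 1 := by
      cases n0 with
      | zero => simp
      | succ n0 => simp [List.replicate_succ]
    have h1 : leadCount 1 (List.replicate m0 1 ++ List.replicate n0 2)
        = (m0, List.replicate n0 2) := leadCount_rep_append m0 hhead
    have h2 : leadCount 2 (List.replicate n0 2) = (n0, []) := by
      have := leadCount_rep_append (a := 2) n0 (t := []) (by simp)
      simpa using this
    simp [h1, h2, runsAux_zero]
  · have hn0 : 1 ≤ n0 := valid_head (List.cons_ne_nil r rest') hv
    have hvr : ∀ j ∈ (r :: rest').dropLast, 1 ≤ j := valid_tail hv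
    rw [rword_eq, decodeR]
    set rs : List ℕ := (r :: rest').dropLast.map (· - 1) ++ [(r :: rest').getLastD 0]
      with hrs
    have hL : 1 ≤ (r :: rest').length + n0 - 1 := by simp; omega
    have h1 : leadCount 1 (List.replicate m0 1
        ++ (List.replicate ((r :: rest').length + n0 - 1) 2 ++ U rs))
        = (m0, List.replicate ((r :: rest').length + n0 - 1) 2 ++ U rs) :=
      leadCount_rep_append m0 (by rw [rep2_head hL]; simp)
    have h2 : leadCount 2 (List.replicate ((r :: rest').length + n0 - 1) 2 ++ U rs)
        = ((r :: rest').length + n0 - 1, U rs) :=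
      leadCount_rep_append _ (U_head_ne_two rs)
    have h3 : runsAux (U rs).length (U rs) = rs := runsAux_U rs _ (le_refl _)
    have hrsne : rs ≠ [] := by simp [hrs]
    have hrslen : rs.length = (r :: rest').length := by
      simp [hrs]
    have hdrop : rs.dropLast = (r :: rest').dropLast.map (· - 1) := by
      rw [hrs, List.dropLast_concat]
    have hlast : rs.getLastD 0 = (r :: rest').getLastD 0 := by
      rw [hrs, List.getLastD_eq_getLast?, List.getLast?_concat]
      rfl
    have hmapmap : (((r :: rest').dropLast.map (· - 1)).map (· + 1))
        = (r :: rest').dropLast := by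
      rw [List.map_map]
      have : ∀ x ∈ (r :: rest').dropLast, ((· + 1) ∘ (· - 1)) x = id x := by
        intro x hx
        have := hvr x hx
        simp
        omega
      rw [List.map_congr_left this, List.map_id]
    simp only [h1, h2, h3, if_neg hrsne]
    rw [hdrop, hmapmap, hlast, hrslen]
    have harith : (r :: rest').length + n0 - 1 + 1 - (r :: rest').length = n0 := by
      omega
    rw [harith, dropLast_concat_getLastD (List.cons_ne_nil r rest')]

end Aux

theorem stmt_7 (n : ℕ) :
    Psi '' FibSet n = RSet n ∧
      ∀ k, {w ∈ FibSet n | des w = k}.ncard = {w ∈ RSet n | exc w = k}.ncard := by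
  constructor
  · ext w
    simp only [Set.mem_image, FibSet, RSet, Set.mem_setOf_eq]
    constructor
    · rintro ⟨v, ⟨hf, hlen⟩, rfl⟩
      obtain ⟨m0, ns, hm, hne, hv, rfl⟩ := Aux.fib_repr v hf
      obtain ⟨n0, rest, rfl⟩ := List.exists_cons_of_ne_nil hne
      refine ⟨m0, n0 :: rest, hm, by simp, hv, Aux.psi_fword hm hv, ?_⟩
      rw [Aux.psi_fword hm hv, Aux.length_rword_eq hv]
      exact hlen
    · rintro ⟨m0, ns, hm, hne, hv, rfl, hlen⟩
      obtain ⟨n0, rest, rfl⟩ := List.exists_cons_of_ne_nil hne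
      refine ⟨Fword m0 (n0 :: rest), ⟨Aux.isFib_fword hm hv, ?_⟩, Aux.psi_fword hm hv⟩
      rw [← Aux.length_rword_eq hv]
      exact hlen
  · intro k
    have himg : Psi '' {w ∈ FibSet n | des w = k} = {w ∈ RSet n | exc w = k} := by
      ext w
      simp only [Set.mem_image, Set.mem_setOf_eq, FibSet, RSet]
      constructor
      · rintro ⟨v, ⟨⟨hf, hlen⟩, hdes⟩, rfl⟩
        obtain ⟨m0, ns, hm, hne, hv, rfl⟩ := Aux.fib_repr v hf
        obtain ⟨n0, rest, rfl⟩ := List.exists_cons_of_ne_nil hne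
        rw [Aux.psi_fword hm hv]
        refine ⟨⟨m0, n0 :: rest, hm, by simp, hv, rfl, ?_⟩, ?_⟩
        · rw [Aux.length_rword_eq hv]; exact hlen
        · rw [Aux.exc_rword hv]
          rw [Aux.des_fword hv] at hdes
          simpa using hdes
      · rintro ⟨⟨m0, ns, hm, hne, hv, rfl, hlen⟩, hexc⟩
        obtain ⟨n0, rest, rfl⟩ := List.exists_cons_of_ne_nil hne
        refine ⟨Fword m0 (n0 :: rest), ⟨⟨Aux.isFib_fword hm hv, ?_⟩, ?_⟩,
          Aux.psi_fword hm hv⟩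
        · rw [← Aux.length_rword_eq hv]; exact hlen
        · rw [Aux.des_fword hv]
          rw [Aux.exc_rword hv] at hexc
          simpa using hexc
    have hinj : Set.InjOn Psi {w ∈ FibSet n | des w = k} := by
      rintro w1 ⟨⟨hf1, _⟩, _⟩ w2 ⟨⟨hf2, _⟩, _⟩ heq
      obtain ⟨m1, ns1, hm1, hne1, hv1, rfl⟩ := Aux.fib_repr w1 hf1
      obtain ⟨n01, rest1, rfl⟩ := List.exists_cons_of_ne_nil hne1
      obtain ⟨m2, ns2, hm2, hne2, hv2, rfl⟩ := Aux.fib_repr w2 hf2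
      obtain ⟨n02, rest2, rfl⟩ := List.exists_cons_of_ne_nil hne2
      rw [Aux.psi_fword hm1 hv1, Aux.psi_fword hm2 hv2] at heq
      have h := congrArg Aux.decodeR heq
      rw [Aux.decode_rword hm1 hv1, Aux.decode_rword hm2 hv2] at h
      injection h with ha hb
      injection hb with hc hd
      subst ha; subst hc; subst hd
      rfl
    rw [← himg, Set.ncard_image_of_injOn hinj]
end

section
/- For every n and k, the number of Fibonacci words of length n (binary words with no two consecutive ones) with exactly k descents equals the number of binary words of length n of the form 1^{m_0} 2^{k + n_0 − 1} 1 2^{n_1 − 1} ⋯ 1 2^{n_{k−1} − 1} 1 2^{n_k} (m_0 ∈ {0,1}, n_0,…,n_{k−1} ≥ 1, n_k ≥ 0) with exactly k excedances. -/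
/-! ### Auxiliary development -/

section Aux

/-- `gw l = 1 2^{n₁} 1 2^{n₂} ⋯`. -/
def gw (l : List ℕ) : List ℕ := l.flatMap fun nj => 1 :: List.replicate nj 2

@[simp] lemma gw_nil : gw [] = [] := rfl
@[simp] lemma gw_cons (a : ℕ) (l : List ℕ) :
    gw (a :: l) = 1 :: (List.replicate a 2 ++ gw l) := by simp [gw]

lemma gw_length (l : List ℕ) : (gw l).length = l.length + l.sum := by
  induction l with
  | nil => simp
  | cons a t ih => simp [ih]; omega

lemma gw_count1 (l : List ℕ) : (gw l).count 1 = l.length := by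
  induction l with
  | nil => simp
  | cons a t ih => simp [ih, List.count_replicate]

lemma myGetLastD (l : List ℕ) (h : l ≠ []) (d : ℕ) : l.getLastD d = l.getLast h := by
  cases l with
  | nil => simp at h
  | cons a t => rw [List.getLast_eq_getLastD, List.getLastD_cons]

lemma leadCount_eq_s8 (a : ℕ) (m : ℕ) (w : List ℕ) (h : w.head? ≠ some a) :
    leadCount a (List.replicate m a ++ w) = (m, w) := by
  induction m with
  | zero =>
    simp only [List.replicate_zero, List.nil_append]
    cases w with
    | nil => rfl
    | cons b t =>
      have : b ≠ a := by simpa using h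
      simp [leadCount, this]
  | succ m ih => simp [List.replicate_succ, leadCount, ih]

def pN : ℕ → List ℕ → List ℕ
  | 0, _ => []
  | fuel+1, r =>
    let p := leadCount 2 r
    if p.2 = [] then [p.1] else p.1 :: pN fuel p.2.tail

lemma gw_head (l : List ℕ) : gw l = [] ∨ (gw l).head? = some 1 := by
  cases l with
  | nil => left; rfl
  | cons a t => right; simp

lemma pN_eq : ∀ fuel h t, (List.replicate h 2 ++ gw t).length < fuel →
    pN fuel (List.replicate h 2 ++ gw t) = h :: t := by
  intro fuel
  induction fuel with
  | zero => intro h t hlen; omega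
  | succ fuel ih =>
    intro h t hlen
    have hlc : leadCount 2 (List.replicate h 2 ++ gw t) = (h, gw t) := by
      apply leadCount_eq_s8
      rcases gw_head t with h1 | h1 <;> simp [h1]
    cases t with
    | nil =>
      simp only [gw_nil, List.append_nil] at hlc ⊢
      simp [pN, hlc]
    | cons a t' =>
      have hne : gw (a :: t') ≠ [] := by simp
      simp only [pN, hlc]
      rw [if_neg hne]
      have : (gw (a :: t')).tail = List.replicate a 2 ++ gw t' := by simp
      rw [this, ih]
      have hlen2 : (List.replicate h 2 ++ gw (a :: t')).length
          = h + 1 + (List.replicate a 2 ++ gw t').length := by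
        simp; omega
      omega

/-- A parser recovering `(m0, ns)` from `Fword m0 ns`. -/
def fparse (w : List ℕ) : ℕ × List ℕ :=
  let p := leadCount 1 w
  (p.1, pN (p.2.length + 1) p.2)

lemma Fword_eq (m0 : ℕ) (h : ℕ) (t : List ℕ) :
    Fword m0 (h :: t) = List.replicate m0 1 ++ (List.replicate h 2 ++ gw t) := by
  simp [Fword, gw]

lemma fparse_Fword (m0 h : ℕ) (t : List ℕ) (hcond : 1 ≤ h ∨ t = []) :
    fparse (Fword m0 (h :: t)) = (m0, h :: t) := by
  rw [Fword_eq]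
  have hhead : (List.replicate h 2 ++ gw t).head? ≠ some 1 := by
    rcases hcond with h1 | h1
    · cases h with
      | zero => omega
      | succ h => simp [List.replicate_succ]
    · subst h1
      cases h with
      | zero => simp
      | succ h => simp [List.replicate_succ]
  have hlc : leadCount 1 (List.replicate m0 1 ++ (List.replicate h 2 ++ gw t))
      = (m0, List.replicate h 2 ++ gw t) := leadCount_eq_s8 1 m0 _ hhead
  simp only [fparse, hlc]
  rw [pN_eq]
  omega

@[simp] lemma des_nil' : des [] = 0 := rfl
@[simp] lemma des_single (a : ℕ) : des [a] = 0 := rfl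

lemma des_cons_cons (a b : ℕ) (t : List ℕ) :
    des (a :: b :: t) = (if b < a then 1 else 0) + des (b :: t) := by
  simp [des, List.countP_cons]; omega

lemma des_one_cons (t : List ℕ) (h : ∀ x ∈ t, 1 ≤ x) : des (1 :: t) = des t := by
  cases t with
  | nil => rfl
  | cons b t' =>
    rw [des_cons_cons]
    have : ¬ b < 1 := by have := h b (by simp); omega
    simp [this]

lemma des_replicate (n a : ℕ) : des (List.replicate n a) = 0 := by
  induction n with
  | zero => rfl
  | succ n ih =>
    cases n with
    | zero => rfl
    | succ m =>
      rw [List.replicate_succ, List.replicate_succ, des_cons_cons, ← List.replicate_succ, ih]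
      simp

lemma des_twos_one (n : ℕ) (w : List ℕ) (hw : w.head? = some 1) :
    des (List.replicate (n+1) 2 ++ w) = 1 + des w := by
  induction n with
  | zero =>
    cases w with
    | nil => simp at hw
    | cons b t =>
      have : b = 1 := by simpa using hw
      subst this
      simp [des_cons_cons]
  | succ n ih =>
    rw [show List.replicate (n+1+1) 2 ++ w = 2 :: (List.replicate (n+1) 2 ++ w) by
      simp [List.replicate_succ]]
    rw [show (2:ℕ) :: (List.replicate (n+1) 2 ++ w) = 2 :: 2 :: (List.replicate n 2 ++ w) by
      simp [List.replicate_succ]]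
    rw [des_cons_cons]
    rw [show (2:ℕ) :: (List.replicate n 2 ++ w) = List.replicate (n+1) 2 ++ w by
      simp [List.replicate_succ]]
    simp [ih]

lemma main_aux : ∀ l : List ℕ, (∀ j ∈ l.dropLast, 1 ≤ j) → ∀ n0 : ℕ, (l ≠ [] → 1 ≤ n0) →
    IsBinary (List.replicate n0 2 ++ gw l) ∧
    (List.replicate n0 2 ++ gw l).Chain' (fun a b => ¬(a = 1 ∧ b = 1)) ∧
    des (List.replicate n0 2 ++ gw l) = l.length ∧
    (List.replicate n0 2 ++ gw l).length = n0 + l.length + l.sum := by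
  intro l
  induction l with
  | nil =>
    intro _ n0 _
    refine ⟨?_, ?_, ?_, ?_⟩
    · intro a ha; simp at ha; simp [ha]
    · simp only [gw_nil, List.append_nil]
      apply List.isChain_replicate_of_rel; simp
    · simp [des_replicate]
    · simp
  | cons n1 l' ih =>
    intro hdl n0 hn0
    have hn0' : 1 ≤ n0 := hn0 (by simp)
    have hdl' : ∀ j ∈ l'.dropLast, 1 ≤ j := by
      intro j hj
      apply hdl
      cases l' with
      | nil => simp at hj
      | cons b t => rw [List.dropLast_cons₂]; exact List.mem_cons_of_mem _ hj
    have hn1 : l' ≠ [] → 1 ≤ n1 := by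
      intro hne
      apply hdl
      cases l' with
      | nil => simp at hne
      | cons b t => rw [List.dropLast_cons₂]; simp
    obtain ⟨ihB, ihC, ihD, ihL⟩ := ih hdl' n1 hn1
    set W' : List ℕ := List.replicate n1 2 ++ gw l' with hW'
    have hshape : List.replicate n0 2 ++ gw (n1 :: l') = List.replicate n0 2 ++ (1 :: W') := by
      simp [hW']
    rw [hshape]
    have hWhead : ∀ b ∈ W'.head?, ¬(1 = 1 ∧ b = 1) := by
      intro b hb
      simp only [Option.mem_def] at hb
      rcases Nat.eq_zero_or_pos n1 with h1 | h1
      · subst h1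
        simp only [List.replicate_zero, List.nil_append, hW'] at hb
        have hl' : l' = [] := by
          by_contra hne
          exact absurd (hn1 hne) (by omega)
        rw [hl'] at hb; simp at hb
      · have : W'.head? = some 2 := by
          rw [hW']
          cases n1 with
          | zero => omega
          | succ m => simp [List.replicate_succ]
        rw [this] at hb
        simp at hb; omega
    refine ⟨?_, ?_, ?_, ?_⟩
    · intro a ha
      simp only [List.mem_append, List.mem_cons, List.mem_replicate] at ha
      rcases ha with h | h | h
      · right; exact h.2
      · left; exact h
      · exact ihB a (by simpa [hW'] using h)
    · rw [List.Chain', List.isChain_append]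
      refine ⟨List.isChain_replicate_of_rel _ (by simp), ?_, ?_⟩
      · rw [List.isChain_cons]
        exact ⟨hWhead, ihC⟩
      · intro x hx y hy
        have : x = 2 := by
          cases n0 with
          | zero => omega
          | succ m =>
            have := List.mem_of_mem_getLast? hx
            exact List.eq_of_mem_replicate this
        simp [this]
    · obtain ⟨m, hm⟩ : ∃ m, n0 = m + 1 := ⟨n0 - 1, by omega⟩
      subst hm
      rw [des_twos_one _ _ (by simp)]
      rw [des_one_cons]
      · rw [ihD]; simp only [List.length_cons]; omega
      · intro x hx
        rcases ihB x hx with h | h <;> omega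
    · simp only [List.length_append, List.length_cons, List.length_replicate,
        List.sum_cons]
      omega

lemma lenF (m0 h : ℕ) (t : List ℕ) :
    (Fword m0 (h :: t)).length = m0 + t.length + (h :: t).sum := by
  rw [Fword_eq]
  simp [gw_length]
  omega

lemma Fword_props (m0 h : ℕ) (t : List ℕ) (hm : m0 ≤ 1)
    (hd : ∀ j ∈ (h :: t).dropLast, 1 ≤ j) :
    IsFib (Fword m0 (h :: t)) ∧ des (Fword m0 (h :: t)) = t.length := by
  have hdt : ∀ j ∈ t.dropLast, 1 ≤ j := by
    intro j hj
    apply hd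
    cases t with
    | nil => simp at hj
    | cons b t' => rw [List.dropLast_cons₂]; exact List.mem_cons_of_mem _ hj
  have hh : t ≠ [] → 1 ≤ h := by
    intro hne
    apply hd
    cases t with
    | nil => simp at hne
    | cons b t' => rw [List.dropLast_cons₂]; simp
  obtain ⟨hB, hC, hD, _⟩ := main_aux t hdt h hh
  set W : List ℕ := List.replicate h 2 ++ gw t with hW
  rw [Fword_eq]
  interval_cases m0
  · simp only [List.replicate_zero, List.nil_append]
    exact ⟨⟨hB, hC⟩, hD⟩
  · have hWne1 : ∀ b ∈ W.head?, ¬(1 = 1 ∧ b = 1) := by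
      intro b hb
      simp only [Option.mem_def] at hb
      rcases Nat.eq_zero_or_pos h with h1 | h1
      · subst h1
        have ht : t = [] := by
          by_contra hne
          exact absurd (hh hne) (by omega)
        rw [hW, ht] at hb; simp at hb
      · have : W.head? = some 2 := by
          rw [hW]
          cases h with
          | zero => omega
          | succ m => simp [List.replicate_succ]
        rw [this] at hb; simp at hb; omega
    have h1W : List.replicate 1 1 ++ W = 1 :: W := by simp
    rw [h1W]
    refine ⟨⟨?_, ?_⟩, ?_⟩
    · intro a ha
      rcases List.mem_cons.mp ha with h1 | h1
      · left; exact h1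
      · exact hB a h1
    · rw [List.Chain', List.isChain_cons]
      exact ⟨hWne1, hC⟩
    · rw [des_one_cons]
      · exact hD
      · intro x hx
        rcases hB x hx with h1 | h1 <;> omega

lemma exists_decomp : ∀ w, IsFib w → ∃ m0 h t, m0 ≤ 1 ∧
    (∀ j ∈ (h :: t).dropLast, 1 ≤ j) ∧ w = Fword m0 (h :: t) ∧ t.length = des w := by
  intro w
  induction w with
  | nil =>
    intro _
    exact ⟨0, 0, [], by omega, by simp, by simp [Fword], by simp⟩
  | cons a tl ih =>
    intro hFib
    have htl : IsFib tl := by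
      refine ⟨fun x hx => hFib.1 x (List.mem_cons_of_mem _ hx), hFib.2.tail⟩
    obtain ⟨m0', h', t', hm', hd', heq', hlen'⟩ := ih htl
    have hBtl : ∀ x ∈ tl, 1 ≤ x := by
      intro x hx
      rcases htl.1 x hx with h1 | h1 <;> omega
    rcases hFib.1 a (by simp) with ha | ha
    · -- a = 1
      subst ha
      have hm0 : m0' = 0 := by
        by_contra hne
        have hm1 : m0' = 1 := by omega
        have : tl.head? = some 1 := by
          rw [heq', hm1, Fword_eq]
          simp [List.replicate_succ]
        have hch := (List.isChain_cons.mp hFib.2).1 1 this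
        simp at hch
      refine ⟨1, h', t', le_refl 1, hd', ?_, ?_⟩
      · rw [heq', hm0, Fword_eq, Fword_eq]
        simp [List.replicate_succ]
      · rw [des_one_cons tl hBtl]
        exact hlen'
    · -- a = 2
      subst ha
      rcases Nat.eq_zero_or_pos m0' with hm0 | hm0
      · -- tl = 2^{h'} ++ gw t', w = Fword 0 ((h'+1) :: t')
        have hdt' : ∀ j ∈ t'.dropLast, 1 ≤ j := by
          intro j hj
          apply hd'
          cases t' with
          | nil => simp at hj
          | cons b t'' => rw [List.dropLast_cons₂]; exact List.mem_cons_of_mem _ hj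
        have hweq : (2 : ℕ) :: tl = Fword 0 ((h' + 1) :: t') := by
          rw [heq', hm0, Fword_eq, Fword_eq]
          simp [List.replicate_succ]
        refine ⟨0, h' + 1, t', by omega, ?_, hweq, ?_⟩
        · intro j hj
          cases t' with
          | nil => simp at hj
          | cons b t'' =>
            rw [List.dropLast_cons₂] at hj
            rcases List.mem_cons.mp hj with h1 | h1
            · omega
            · exact hd' j (by rw [List.dropLast_cons₂]; exact List.mem_cons_of_mem _ h1)
        · have := (main_aux t' hdt' (h' + 1) (fun _ => by omega)).2.2.1
          rw [hweq, Fword_eq]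
          simp only [List.nil_append, List.replicate_zero] at *
          omega
      · -- m0' = 1; w = Fword 0 (1 :: h' :: t')
        have hm1 : m0' = 1 := by omega
        have hd2 : ∀ j ∈ ((1:ℕ) :: h' :: t').dropLast, 1 ≤ j := by
          intro j hj
          rw [List.dropLast_cons₂] at hj
          rcases List.mem_cons.mp hj with h1 | h1
          · omega
          · exact hd' j h1
        have hweq : (2 : ℕ) :: tl = Fword 0 ((1:ℕ) :: h' :: t') := by
          rw [heq', hm1, Fword_eq, Fword_eq]
          simp [List.replicate_succ]
        refine ⟨0, 1, h' :: t', by omega, hd2, hweq, ?_⟩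
        have hdt2 : ∀ j ∈ (h' :: t').dropLast, 1 ≤ j := hd'
        have := (main_aux (h' :: t') hdt2 1 (fun _ => le_refl 1)).2.2.1
        rw [hweq, Fword_eq]
        simp only [List.replicate_zero, List.nil_append] at *
        omega

/-- The transformation from Fibonacci block data to R-word block data. -/
def Tns : List ℕ → List ℕ
  | [] => []
  | [n0] => [n0]
  | n0 :: rest => (rest.length + n0 - 1) :: (rest.dropLast.map (· - 1) ++ [rest.getLastD 0])

lemma Rword_eq_Fword (m0 : ℕ) (ns : List ℕ) : Rword m0 ns = Fword m0 (Tns ns) := by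
  match ns with
  | [] => simp [Rword, Tns, Fword]
  | [n0] => simp [Rword, Tns, Fword]
  | n0 :: b :: rest =>
    show Rword m0 (n0 :: b :: rest) = Fword m0 (_ :: _)
    rw [Fword_eq]
    simp only [Rword, gw, List.flatMap_append, List.flatMap_map]
    simp [List.append_assoc, Function.comp]

lemma sum_map_sub (l : List ℕ) (h : ∀ j ∈ l, 1 ≤ j) :
    (l.map (· - 1)).sum + l.length = l.sum := by
  induction l with
  | nil => simp
  | cons a t ih =>
    have ha := h a (by simp)
    have := ih (fun j hj => h j (List.mem_cons_of_mem _ hj))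
    simp only [List.map_cons, List.sum_cons, List.length_cons]
    omega

lemma Tns_sum (ns : List ℕ) (hne : ns ≠ []) (hd : ∀ j ∈ ns.dropLast, 1 ≤ j) :
    (Tns ns).sum = ns.sum := by
  match ns with
  | [n0] => rfl
  | n0 :: b :: rest =>
    have hrne : (b :: rest : List ℕ) ≠ [] := by simp
    have hn0 : 1 ≤ n0 := hd n0 (by rw [List.dropLast_cons₂]; simp)
    have hdr : ∀ j ∈ (b :: rest).dropLast, 1 ≤ j := by
      intro j hj
      exact hd j (by rw [List.dropLast_cons₂]; exact List.mem_cons_of_mem _ hj)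
    have hsplit : (b :: rest).dropLast ++ [(b :: rest).getLast hrne] = b :: rest :=
      List.dropLast_append_getLast hrne
    have hgl : (b :: rest).getLastD 0 = (b :: rest).getLast hrne :=
      myGetLastD _ hrne 0
    have hsum2 : (b :: rest).dropLast.sum + (b :: rest).getLast hrne = (b :: rest).sum := by
      conv_rhs => rw [← hsplit]
      simp
    have hmap := sum_map_sub (b :: rest).dropLast hdr
    have hlen : (b :: rest).dropLast.length = rest.length := by simp
    simp only [Tns, List.sum_cons, List.sum_append, List.sum_nil, hgl]
    simp only [List.sum_cons] at hsum2
    simp only [List.length_cons] at *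
    omega

lemma Tns_inj (k : ℕ) (ns ns' : List ℕ)
    (hlen : ns.length = k + 1) (hlen' : ns'.length = k + 1)
    (hd : ∀ j ∈ ns.dropLast, 1 ≤ j) (hd' : ∀ j ∈ ns'.dropLast, 1 ≤ j)
    (heq : Tns ns = Tns ns') : ns = ns' := by
  match ns, ns' with
  | [n0], [n0'] => exact heq
  | [n0], n0' :: b' :: rest' => simp at hlen hlen'; omega
  | n0 :: b :: rest, [n0'] => simp at hlen hlen'; omega
  | n0 :: b :: rest, n0' :: b' :: rest' =>
    have hlr : rest.length = rest'.length := by simp at hlen hlen'; omega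
    have hn0 : 1 ≤ n0 := hd n0 (by rw [List.dropLast_cons₂]; simp)
    have hn0' : 1 ≤ n0' := hd' n0' (by rw [List.dropLast_cons₂]; simp)
    simp only [Tns, List.cons.injEq] at heq
    obtain ⟨h1, h2⟩ := heq
    have hlen1 : ((b :: rest).dropLast.map (· - 1)).length
        = ((b' :: rest').dropLast.map (· - 1)).length := by
      simp [hlr]
    obtain ⟨h3, h4⟩ := List.append_inj h2 hlen1
    have h4' : (b :: rest).getLastD 0 = (b' :: rest').getLastD 0 := by
      simpa using h4
    have hdrop : (b :: rest).dropLast = (b' :: rest').dropLast := by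
      have hdr : ∀ j ∈ (b :: rest).dropLast, 1 ≤ j := by
        intro j hj
        exact hd j (by rw [List.dropLast_cons₂]; exact List.mem_cons_of_mem _ hj)
      have hdr' : ∀ j ∈ (b' :: rest').dropLast, 1 ≤ j := by
        intro j hj
        exact hd' j (by rw [List.dropLast_cons₂]; exact List.mem_cons_of_mem _ hj)
      have e1 : ((b :: rest).dropLast.map (· - 1)).map (· + 1) = (b :: rest).dropLast := by
        rw [List.map_map]
        rw [List.map_congr_left (g := id) (fun a ha => by
          have := hdr a ha; simp; omega)]
        simp
      have e2 : ((b' :: rest').dropLast.map (· - 1)).map (· + 1) = (b' :: rest').dropLast := by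
        rw [List.map_map]
        rw [List.map_congr_left (g := id) (fun a ha => by
          have := hdr' a ha; simp; omega)]
        simp
      rw [← e1, ← e2, h3]
    have hbr : (b :: rest : List ℕ) = b' :: rest' := by
      have hrne : (b :: rest : List ℕ) ≠ [] := by simp
      have hrne' : (b' :: rest' : List ℕ) ≠ [] := by simp
      rw [← List.dropLast_append_getLast hrne, ← List.dropLast_append_getLast hrne']
      rw [hdrop, ← myGetLastD _ hrne 0, ← myGetLastD _ hrne' 0, h4']
    have hn : n0 = n0' := by
      simp only [List.length_cons] at h1 hlr
      omega
    rw [hn, hbr]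

lemma exc_Fword (m0 h : ℕ) (t : List ℕ) (hle : t.length ≤ h) :
    exc (Fword m0 (h :: t)) = t.length := by
  rw [Fword_eq]
  have hc1 : (List.replicate m0 1 ++ (List.replicate h 2 ++ gw t)).count 1 = m0 + t.length := by
    simp [List.count_replicate, gw_count1]
  rw [exc, hc1]
  have ht1 : (List.replicate m0 1 ++ (List.replicate h 2 ++ gw t)).take (m0 + t.length)
      = List.replicate m0 1 ++ List.replicate t.length 2 := by
    rw [show m0 + t.length = (List.replicate m0 (1:ℕ)).length + t.length by simp]
    rw [List.take_append]
    congr 1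
    · simp [List.take_replicate]
    rw [show (List.replicate m0 (1:ℕ)).length + t.length - (List.replicate m0 (1:ℕ)).length
        = t.length by omega]
    rw [List.take_append_of_le_length (by simp [hle])]
    simp [List.take_replicate]
    omega
  rw [ht1]
  simp [List.count_replicate]

end Aux

theorem stmt_8 (n k : ℕ) :
    {w | IsFib w ∧ w.length = n ∧ des w = k}.ncard =
      {w | (∃ m0 ns, m0 ≤ 1 ∧ ns.length = k + 1 ∧
              (∀ j ∈ List.dropLast ns, 1 ≤ j) ∧ w = Rword m0 ns) ∧
            w.length = n ∧ exc w = k}.ncard := by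
  classical
  set P : Set (ℕ × List ℕ) :=
    {p | p.1 ≤ 1 ∧ p.2.length = k + 1 ∧ (∀ j ∈ p.2.dropLast, 1 ≤ j) ∧ p.1 + k + p.2.sum = n}
    with hPdef
  -- decomposition of second components
  have hsplit : ∀ ns : List ℕ, ns.length = k + 1 → (∀ j ∈ ns.dropLast, 1 ≤ j) →
      ∃ h t, ns = h :: t ∧ (1 ≤ h ∨ t = []) ∧ t.length = k := by
    intro ns hlen hd
    cases ns with
    | nil => simp at hlen
    | cons h t =>
      refine ⟨h, t, rfl, ?_, by simp at hlen; omega⟩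
      cases t with
      | nil => right; rfl
      | cons b t' => left; exact hd h (by rw [List.dropLast_cons₂]; simp)
  have hTshape : ∀ ns : List ℕ, ns.length = k + 1 → (∀ j ∈ ns.dropLast, 1 ≤ j) →
      ∃ H T, Tns ns = H :: T ∧ (1 ≤ H ∨ T = []) ∧ T.length = k ∧ k ≤ H ∧
        (Tns ns).sum = ns.sum := by
    intro ns hlen hd
    match ns with
    | [] => simp at hlen
    | [h] =>
      have hk : k = 0 := by simp at hlen; omega
      exact ⟨h, [], rfl, Or.inr rfl, by simp [hk], by omega, rfl⟩
    | h :: b :: rest =>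
      have hh : 1 ≤ h := hd h (by rw [List.dropLast_cons₂]; simp)
      have hk : k = rest.length + 1 := by simp at hlen; omega
      refine ⟨(b :: rest).length + h - 1, (b :: rest).dropLast.map (· - 1) ++ [(b :: rest).getLastD 0],
        rfl, ?_, ?_, ?_, Tns_sum _ (by simp) hd⟩
      · left; simp; omega
      · simp; omega
      · simp; omega
  -- LHS as an image
  have hL : {w | IsFib w ∧ w.length = n ∧ des w = k}
      = (fun p : ℕ × List ℕ => Fword p.1 p.2) '' P := by
    ext w
    constructor
    · rintro ⟨hFib, hlen, hdes⟩
      obtain ⟨m0, h, t, hm, hd, heq, hlt⟩ := exists_decomp w hFib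
      have hlenF := lenF m0 h t
      rw [← heq] at hlenF
      refine ⟨(m0, h :: t), ⟨hm, by simp; omega, hd, ?_⟩, heq.symm⟩
      simp only [List.sum_cons] at hlenF ⊢
      omega
    · rintro ⟨⟨m0, ns⟩, ⟨hm, hlens, hd, hsum⟩, rfl⟩
      simp only at hm hlens hd hsum ⊢
      obtain ⟨h, t, rfl, _, htk⟩ := hsplit ns hlens hd
      obtain ⟨hFib, hdes⟩ := Fword_props m0 h t hm hd
      have hlenF := lenF m0 h t
      exact ⟨hFib, by omega, by omega⟩
  -- RHS as an image
  have hR : {w | (∃ m0 ns, m0 ≤ 1 ∧ ns.length = k + 1 ∧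
        (∀ j ∈ List.dropLast ns, 1 ≤ j) ∧ w = Rword m0 ns) ∧
        w.length = n ∧ exc w = k}
      = (fun p : ℕ × List ℕ => Rword p.1 p.2) '' P := by
    ext w
    constructor
    · rintro ⟨⟨m0, ns, hm, hlens, hd, rfl⟩, hlen, _⟩
      refine ⟨(m0, ns), ⟨hm, hlens, hd, ?_⟩, rfl⟩
      obtain ⟨H, T, hT, _, hTl, _, hTsum⟩ := hTshape ns hlens hd
      rw [Rword_eq_Fword, hT] at hlen
      rw [lenF] at hlen
      simp only [List.sum_cons] at hlen
      rw [hT] at hTsum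
      simp only [List.sum_cons] at hTsum
      simp only
      omega
    · rintro ⟨⟨m0, ns⟩, ⟨hm, hlens, hd, hsum⟩, rfl⟩
      simp only at hm hlens hd hsum ⊢
      obtain ⟨H, T, hT, _, hTl, hkH, hTsum⟩ := hTshape ns hlens hd
      have hlenR : (Rword m0 ns).length = n := by
        rw [Rword_eq_Fword, hT, lenF]
        simp only [List.sum_cons]
        rw [hT] at hTsum
        simp only [List.sum_cons] at hTsum
        omega
      refine ⟨⟨m0, ns, hm, hlens, hd, rfl⟩, hlenR, ?_⟩
      rw [Rword_eq_Fword, hT, exc_Fword m0 H T (by omega)]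
      exact hTl
  -- injectivity of the two parametrizations
  have injF : Set.InjOn (fun p : ℕ × List ℕ => Fword p.1 p.2) P := by
    rintro ⟨m0, ns⟩ hp ⟨m0', ns'⟩ hp' heq
    obtain ⟨hm, hlens, hd, hsum⟩ := hp
    obtain ⟨hm', hlens', hd', hsum'⟩ := hp'
    simp only at heq hm hlens hd hm' hlens' hd' ⊢
    obtain ⟨h, t, rfl, hc, _⟩ := hsplit ns hlens hd
    obtain ⟨h', t', rfl, hc', _⟩ := hsplit ns' hlens' hd'
    have e1 := fparse_Fword m0 h t hc
    have e2 := fparse_Fword m0' h' t' hc'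
    rw [heq, e2] at e1
    simp only [Prod.mk.injEq] at e1
    simp [e1.1, e1.2]
  have injR : Set.InjOn (fun p : ℕ × List ℕ => Rword p.1 p.2) P := by
    rintro ⟨m0, ns⟩ hp ⟨m0', ns'⟩ hp' heq
    obtain ⟨hm, hlens, hd, hsum⟩ := hp
    obtain ⟨hm', hlens', hd', hsum'⟩ := hp'
    simp only [Rword_eq_Fword] at heq hm hlens hd hm' hlens' hd' ⊢
    obtain ⟨H, T, hT, hc, _⟩ := hTshape ns hlens hd
    obtain ⟨H', T', hT', hc', _⟩ := hTshape ns' hlens' hd'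
    rw [hT, hT'] at heq
    have e1 := fparse_Fword m0 H T hc
    have e2 := fparse_Fword m0' H' T' hc'
    rw [heq, e2] at e1
    simp only [Prod.mk.injEq] at e1
    have hns : ns = ns' := by
      apply Tns_inj k ns ns' hlens hlens' hd hd'
      rw [hT, hT', e1.2]
    simp [e1.1, hns]
  rw [hL, hR, Set.ncard_image_of_injOn injF, Set.ncard_image_of_injOn injR]
end

section
/- Let F'_n be the set of Fibonacci words of length n ending with the letter 1. The map Ψ (inverse Foata first transformation on binary words) restricted to F'_n is injective, and Ψ(F'_n) = {ω ∈ Ψ(F_n) : ω ends with 1}. -/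
namespace Stmt9Aux

/-! ### leadCount lemmas -/

lemma leadCount_no (a : ℕ) (r : List ℕ) (h : r.head? ≠ some a) : leadCount a r = (0, r) := by
  cases r with
  | nil => rfl
  | cons b t =>
    have hb : b ≠ a := by simpa using h
    simp [leadCount, hb]

lemma leadCount_rep (a k : ℕ) (r : List ℕ) (h : r.head? ≠ some a) :
    leadCount a (List.replicate k a ++ r) = (k, r) := by
  induction k with
  | zero => simpa using leadCount_no a r h
  | succ k ih => simp [List.replicate_succ, leadCount, ih]

lemma leadCount_suffix (a : ℕ) : ∀ r : List ℕ, (leadCount a r).2 <:+ r := by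
  intro r; induction r with
  | nil => simp [leadCount]
  | cons b t ih =>
    by_cases hb : b = a
    · simp only [leadCount, hb, if_pos rfl]
      exact ih.trans (List.suffix_cons a t)
    · simp [leadCount, hb]

lemma leadCount_cons_self (a : ℕ) (t : List ℕ) :
    leadCount a (a :: t) = ((leadCount a t).1 + 1, (leadCount a t).2) := by
  simp [leadCount]

lemma leadCount_len (a : ℕ) : ∀ r : List ℕ, (leadCount a r).2.length + (leadCount a r).1 = r.length := by
  intro r; induction r with
  | nil => simp [leadCount]
  | cons b t ih =>
    by_cases hb : b = a
    · subst hb; rw [leadCount_cons_self]; simp only [List.length_cons]; omega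
    · simp [leadCount, hb]

lemma leadCount_pos (a : ℕ) (t : List ℕ) : 1 ≤ (leadCount a (a :: t)).1 := by
  simp [leadCount]

/-! ### blocksAux fuel lemmas -/

lemma blocksAux_succ (f : ℕ) (w : List ℕ) (hw : w ≠ []) :
    blocksAux (f+1) w =
      ((leadCount 1 w).1, (leadCount 2 (leadCount 1 w).2).1)
        :: blocksAux f (leadCount 2 (leadCount 1 w).2).2 := by
  cases w with
  | nil => simp at hw
  | cons b t => rfl

lemma rest_lt (w : List ℕ) (hb : IsBinary w) (hw : w ≠ []) :
    (leadCount 2 (leadCount 1 w).2).2.length < w.length := by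
  have h1 := leadCount_len 1 w
  have h2 := leadCount_len 2 (leadCount 1 w).2
  cases w with
  | nil => simp at hw
  | cons b t =>
    rcases hb b (by simp) with rfl | rfl
    · have := leadCount_pos 1 t
      have h3 := (leadCount_suffix 2 (leadCount 1 (1 :: t)).2).length_le
      simp only [List.length_cons] at *
      omega
    · have hno : leadCount 1 (2 :: t) = (0, 2 :: t) := leadCount_no 1 _ (by simp)
      rw [hno]
      have h2' := leadCount_len 2 (2 :: t)
      have := leadCount_pos 2 t
      simp only [List.length_cons] at *
      omega

lemma rest_binary (w : List ℕ) (hb : IsBinary w) :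
    IsBinary (leadCount 2 (leadCount 1 w).2).2 := by
  intro x hx
  exact hb x (((leadCount_suffix 2 _).trans (leadCount_suffix 1 w)).subset hx)

lemma blocksAux_fuel : ∀ L w, IsBinary w → w.length ≤ L →
    ∀ f1 f2, w.length ≤ f1 → w.length ≤ f2 → blocksAux f1 w = blocksAux f2 w := by
  intro L
  induction L with
  | zero =>
    intro w _ hL f1 f2 _ _
    have : w = [] := by
      cases w with
      | nil => rfl
      | cons b t => simp at hL
    subst this
    cases f1 <;> cases f2 <;> rfl
  | succ L ih =>
    intro w hb hL f1 f2 h1 h2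
    cases w with
    | nil => cases f1 <;> cases f2 <;> rfl
    | cons b t =>
      have hne : (b :: t : List ℕ) ≠ [] := by simp
      have hlen : 1 ≤ (b :: t : List ℕ).length := by simp
      obtain ⟨f1', rfl⟩ : ∃ f1', f1 = f1' + 1 := ⟨f1 - 1, by omega⟩
      obtain ⟨f2', rfl⟩ : ∃ f2', f2 = f2' + 1 := ⟨f2 - 1, by omega⟩
      rw [blocksAux_succ f1' _ hne, blocksAux_succ f2' _ hne]
      have hlt := rest_lt (b :: t) hb hne
      have hbin := rest_binary (b :: t) hb
      congr 1
      exact ih _ hbin (by omega) _ _ (by omega) (by omega)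

/-! ### the block-step lemma -/

lemma blocks_step (m nn : ℕ) (r : List ℕ) (hbin : IsBinary r) (h2 : r.head? ≠ some 2)
    (h1 : 1 ≤ nn ∨ r.head? ≠ some 1) (hmn : 1 ≤ m + nn) :
    blocks (List.replicate m 1 ++ List.replicate nn 2 ++ r) = (m, nn) :: blocks r := by
  set w := List.replicate m 1 ++ List.replicate nn 2 ++ r with hw
  have hwlen : w.length = m + nn + r.length := by simp [hw]; omega
  have hp : leadCount 1 w = (m, List.replicate nn 2 ++ r) := by
    rw [hw, List.append_assoc]
    refine leadCount_rep 1 m _ ?_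
    cases nn with
    | zero => simpa using h1.resolve_left (by omega)
    | succ nn' => simp [List.replicate_succ]
  have hq : leadCount 2 (List.replicate nn 2 ++ r) = (nn, r) := leadCount_rep 2 nn r h2
  have hwne : w ≠ [] := by
    intro h
    rw [h] at hwlen
    simp at hwlen
    omega
  obtain ⟨L, hL⟩ : ∃ L, w.length = L + 1 := ⟨w.length - 1, by omega⟩
  unfold blocks
  rw [hL, blocksAux_succ L w hwne, hp]
  simp only [hq]
  congr 1
  exact blocksAux_fuel r.length r hbin le_rfl _ _ (by omega) le_rfl

/-! ### normal form for Fibonacci words -/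

def T2 (ns : List ℕ) : List ℕ := ns.flatMap fun nj => List.replicate nj 2 ++ [1]

def Bw (m0 : ℕ) (ns : List ℕ) : List ℕ := List.replicate m0 1 ++ T2 ns

def Tw (tl : List ℕ) : List ℕ := tl.flatMap fun nj => List.replicate (nj - 1) 2 ++ [1]

lemma isBinary_BwK (m0 : ℕ) (ns : List ℕ) (k : ℕ) :
    IsBinary (Bw m0 ns ++ List.replicate k 2) := by
  intro a ha
  simp only [Bw, T2, List.mem_append, List.mem_flatMap, List.mem_replicate,
    List.mem_cons, List.mem_singleton] at ha
  rcases ha with ((h | ⟨x, _, h⟩) | h)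
  · exact Or.inl h.2
  · rcases h with h | h
    · exact Or.inr h.2
    · simp at h; exact Or.inl h
  · exact Or.inr h.2

def bsOf (m0 : ℕ) (ns : List ℕ) (k : ℕ) : List (ℕ × ℕ) :=
  match ns with
  | [] => [(m0, k)]
  | n0 :: tl => (m0, n0) :: ((tl.map fun nj => (1, nj)) ++ [(1, k)])

lemma blocks_BwK : ∀ ns m0 k, (∀ j ∈ ns, 1 ≤ j) → 1 ≤ m0 + ns.length + k →
    blocks (Bw m0 ns ++ List.replicate k 2) = bsOf m0 ns k := by
  intro ns
  induction ns with
  | nil =>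
    intro m0 k _ hne
    have : Bw m0 [] ++ List.replicate k 2 = List.replicate m0 1 ++ List.replicate k 2 ++ [] := by
      simp only [Bw, T2, List.flatMap_nil, List.append_nil]
    rw [this, blocks_step m0 k [] (by intro a h; simp at h) (by simp) (Or.inr (by simp))
      (by simpa using hne)]
    rfl
  | cons n0 tl ih =>
    intro m0 k hpos hne
    have hrw : Bw m0 (n0 :: tl) ++ List.replicate k 2
        = List.replicate m0 1 ++ List.replicate n0 2 ++ (Bw 1 tl ++ List.replicate k 2) := by
      simp [Bw, T2, List.flatMap_cons, List.replicate_succ]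
    have hhead : (Bw 1 tl ++ List.replicate k 2).head? = some 1 := by
      simp [Bw, List.replicate_succ]
    rw [hrw, blocks_step m0 n0 _ (isBinary_BwK 1 tl k) (by rw [hhead]; simp)
      (Or.inl (hpos n0 (by simp))) (by have := hpos n0 (by simp); omega)]
    rw [ih 1 k (fun j hj => hpos j (by simp [hj])) (by omega)]
    cases tl <;> rfl

/-! ### Psi on the normal form -/

lemma map_flat (tl : List ℕ) :
    ((tl.map fun nj => ((1:ℕ), nj)).flatMap fun p => 2 :: List.replicate (p.1 - 1) 1)
      = List.replicate tl.length 2 := by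
  induction tl with
  | nil => rfl
  | cons a t ih => simp [List.replicate_succ, ih]

lemma map_flat2 (tl : List ℕ) :
    ((tl.map fun nj => ((1:ℕ), nj)).flatMap fun p => List.replicate (p.2 - 1) 2 ++ [1])
      = Tw tl := by
  simp [Tw, List.flatMap_map]

lemma psi_bsOf_nil (m0 k : ℕ) :
    psiBlocks (bsOf m0 [] k) = List.replicate m0 1 ++ List.replicate k 2 := by
  simp [psiBlocks, bsOf]

lemma psi_bsOf_cons (m0 n0 k : ℕ) (tl : List ℕ) (h0 : 1 ≤ n0) :
    psiBlocks (bsOf m0 (n0 :: tl) k) =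
      List.replicate m0 1 ++ List.replicate (tl.length + n0) 2
        ++ ([1] ++ (Tw tl ++ List.replicate k 2)) := by
  have hdl : ((m0, n0) :: ((tl.map fun nj => ((1:ℕ), nj)) ++ [(1, k)])).dropLast
      = (m0, n0) :: (tl.map fun nj => ((1:ℕ), nj)) := by
    rw [← List.cons_append]
    exact List.dropLast_concat
  have hlast : ((m0, n0) :: ((tl.map fun nj => ((1:ℕ), nj)) ++ [(1, k)])).getLastD (0,0)
      = (1, k) := by
    rw [← List.cons_append, List.getLastD_eq_getLast?, List.getLast?_concat]
    rfl
  simp only [psiBlocks, bsOf, List.headD_cons, List.tail_cons, hdl, hlast,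
    List.flatMap_append, map_flat, List.flatMap_cons, List.flatMap_nil, List.flatMap_append,
    map_flat2, List.append_nil]
  have h2 : List.replicate n0 2 = 2 :: List.replicate (n0 - 1) 2 := by
    obtain ⟨n', rfl⟩ : ∃ n', n0 = n' + 1 := ⟨n0 - 1, by omega⟩
    simp [List.replicate_succ]
  have h1 : List.replicate (tl.length + n0) 2
      = List.replicate tl.length 2 ++ (2 :: List.replicate (n0 - 1) 2) := by
    rw [List.replicate_add, h2]
  rw [h1]
  simp [List.append_assoc]

lemma Psi_BwK_nil (m0 k : ℕ) (h : 1 ≤ m0 + k) :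
    Psi (Bw m0 [] ++ List.replicate k 2) = List.replicate m0 1 ++ List.replicate k 2 := by
  unfold Psi
  rw [blocks_BwK [] m0 k (by simp) (by simpa using h), psi_bsOf_nil]

lemma Psi_BwK_cons (m0 n0 k : ℕ) (tl : List ℕ) (h0 : 1 ≤ n0) (htl : ∀ j ∈ tl, 1 ≤ j) :
    Psi (Bw m0 (n0 :: tl) ++ List.replicate k 2) =
      List.replicate m0 1 ++ List.replicate (tl.length + n0) 2
        ++ ([1] ++ (Tw tl ++ List.replicate k 2)) := by
  unfold Psi
  rw [blocks_BwK (n0 :: tl) m0 k (fun j hj => by rcases List.mem_cons.mp hj with rfl | hj; exacts [h0, htl j hj]) (by simp; omega),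
    psi_bsOf_cons m0 n0 k tl h0]

/-! ### decomposition of Fibonacci words -/

lemma fib_decomp : ∀ w, IsFib w → ∃ m0 ns k, m0 ≤ 1 ∧ (∀ j ∈ ns, 1 ≤ j) ∧
    w = Bw m0 ns ++ List.replicate k 2 := by
  intro w
  induction w with
  | nil => exact fun _ => ⟨0, [], 0, by omega, by simp, by simp [Bw, T2]⟩
  | cons b t ih =>
    intro hf
    have hb : b = 1 ∨ b = 2 := hf.1 b (by simp)
    have ht : IsFib t := ⟨fun a ha => hf.1 a (by simp [ha]), hf.2.tail⟩
    obtain ⟨m0, ns, k, hm, hns, rfl⟩ := ih ht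
    rcases hb with rfl | rfl
    · have hm0 : m0 = 0 := by
        by_contra h
        have hm1 : m0 = 1 := by omega
        subst hm1
        have hch := hf.2
        have : Bw 1 ns ++ List.replicate k 2 = 1 :: (T2 ns ++ List.replicate k 2) := by
          simp [Bw, List.replicate_succ]
        rw [this] at hch
        exact (List.isChain_cons_cons.mp hch).1 ⟨rfl, rfl⟩
      subst hm0
      exact ⟨1, ns, k, le_rfl, hns, by simp [Bw, List.replicate_succ]⟩
    · rcases Nat.lt_or_ge m0 1 with hm0 | hm0
      · have hm0 : m0 = 0 := by omega
        subst hm0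
        cases ns with
        | nil =>
          exact ⟨0, [], k + 1, by omega, by simp, by simp [Bw, T2, List.replicate_succ]⟩
        | cons n0 tl =>
          refine ⟨0, (n0 + 1) :: tl, k, by omega, ?_, ?_⟩
          · intro j hj
            rcases List.mem_cons.mp hj with rfl | hj
            · omega
            · exact hns j (by simp [hj])
          · simp [Bw, T2, List.replicate_succ]
      · have hm1 : m0 = 1 := by omega
        subst hm1
        refine ⟨0, 1 :: ns, k, by omega, ?_, ?_⟩
        · intro j hj
          rcases List.mem_cons.mp hj with rfl | hj
          · exact le_rfl
          · exact hns j hj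
        · simp [Bw, T2, List.replicate_succ]

/-! ### last-letter lemmas -/

lemma last_concat_flat (f : ℕ → List ℕ) (x : List ℕ) (ns : List ℕ) (hns : ns ≠ []) :
    (x ++ ns.flatMap fun nj => f nj ++ [1]).getLast? = some 1 := by
  obtain ⟨l, a, rfl⟩ := (List.eq_nil_or_concat ns).resolve_left hns
  rw [List.concat_eq_append, List.flatMap_append]
  simp only [List.flatMap_cons, List.flatMap_nil, List.append_nil]
  rw [show x ++ ((l.flatMap fun nj => f nj ++ [1]) ++ (f a ++ [1]))
      = (x ++ (l.flatMap fun nj => f nj ++ [1]) ++ f a) ++ [1] by simp [List.append_assoc]]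
  exact List.getLast?_concat

lemma last_rep2 (x : List ℕ) (k : ℕ) (hk : 1 ≤ k) :
    (x ++ List.replicate k 2).getLast? = some 2 := by
  obtain ⟨k', rfl⟩ : ∃ k', k = k' + 1 := ⟨k - 1, by omega⟩
  rw [List.replicate_succ' (n := k') (a := 2), ← List.append_assoc]
  exact List.getLast?_concat

lemma last_Bw_cons (m0 n0 : ℕ) (tl : List ℕ) : (Bw m0 (n0 :: tl)).getLast? = some 1 := by
  unfold Bw T2
  exact last_concat_flat _ _ _ (by simp)

lemma Psi_nil : Psi [] = [] := rfl

/-! ### injectivity of the Tw encoding -/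

lemma Tw_nil : Tw [] = [] := rfl

lemma Tw_cons (n : ℕ) (t : List ℕ) :
    Tw (n :: t) = List.replicate (n - 1) 2 ++ (1 :: Tw t) := by
  simp [Tw]

lemma Tw_cons_ne_nil (n : ℕ) (t : List ℕ) : Tw (n :: t) ≠ [] := by
  rw [Tw_cons]
  simp

lemma Tw_inj : ∀ tl tl', (∀ j ∈ tl, 1 ≤ j) → (∀ j ∈ tl', 1 ≤ j) →
    Tw tl = Tw tl' → tl = tl' := by
  intro tl
  induction tl with
  | nil =>
    intro tl' _ _ he
    cases tl' with
    | nil => rfl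
    | cons n t => exact absurd he.symm (by rw [Tw_nil]; exact Tw_cons_ne_nil n t)
  | cons n t ih =>
    intro tl' hp hp' he
    cases tl' with
    | nil => exact absurd he (by rw [Tw_nil]; exact Tw_cons_ne_nil n t)
    | cons n' t' =>
      rw [Tw_cons, Tw_cons] at he
      have h1 := leadCount_rep 2 (n - 1) (1 :: Tw t) (by simp)
      have h2 := leadCount_rep 2 (n' - 1) (1 :: Tw t') (by simp)
      rw [he, h2] at h1
      have hn : n = n' := by
        have e1 := congrArg Prod.fst h1
        have a1 := hp n (by simp)
        have a2 := hp' n' (by simp)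
        simp at e1
        omega
      have hT : Tw t = Tw t' := by
        have e2 := congrArg Prod.snd h1
        simpa using e2.symm
      rw [hn, ih t' (fun j hj => hp j (by simp [hj])) (fun j hj => hp' j (by simp [hj])) hT]

/-! ### k = 0 specialization and last letters of Psi -/

lemma Psi_Bw_nil (m0 : ℕ) (h : 1 ≤ m0) : Psi (Bw m0 []) = List.replicate m0 1 := by
  have := Psi_BwK_nil m0 0 (by omega)
  simpa using this

lemma Psi_Bw_cons (m0 n0 : ℕ) (tl : List ℕ) (h0 : 1 ≤ n0) (htl : ∀ j ∈ tl, 1 ≤ j) :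
    Psi (Bw m0 (n0 :: tl)) =
      List.replicate m0 1 ++ List.replicate (tl.length + n0) 2 ++ ([1] ++ Tw tl) := by
  have := Psi_BwK_cons m0 n0 0 tl h0 htl
  simpa using this

lemma psi_last_one (m0 : ℕ) (ns : List ℕ) (hm : m0 ≤ 1) (hns : ∀ j ∈ ns, 1 ≤ j)
    (hpos : 1 ≤ m0 + ns.length) : (Psi (Bw m0 ns)).getLast? = some 1 := by
  cases ns with
  | nil =>
    have hm1 : m0 = 1 := by simp at hpos; omega
    subst hm1
    rw [Psi_Bw_nil 1 le_rfl]
    rfl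
  | cons n0 tl =>
    rw [Psi_Bw_cons m0 n0 tl (hns n0 (by simp)) (fun j hj => hns j (by simp [hj]))]
    cases tl with
    | nil =>
      rw [show ([1] ++ Tw []) = [1] from rfl]
      exact List.getLast?_concat
    | cons c t =>
      rw [show List.replicate m0 1 ++ List.replicate (((c :: t) : List ℕ).length + n0) 2
            ++ ([1] ++ Tw (c :: t))
          = (List.replicate m0 1 ++ List.replicate (((c :: t) : List ℕ).length + n0) 2 ++ [1])
            ++ Tw (c :: t) by simp [List.append_assoc]]
      exact last_concat_flat _ _ _ (by simp)

lemma psi_last_two (m0 : ℕ) (ns : List ℕ) (k : ℕ) (hm : m0 ≤ 1) (hns : ∀ j ∈ ns, 1 ≤ j)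
    (hk : 1 ≤ k) : (Psi (Bw m0 ns ++ List.replicate k 2)).getLast? = some 2 := by
  cases ns with
  | nil =>
    rw [Psi_BwK_nil m0 k (by omega)]
    exact last_rep2 _ k hk
  | cons n0 tl =>
    rw [Psi_BwK_cons m0 n0 k tl (hns n0 (by simp)) (fun j hj => hns j (by simp [hj]))]
    rw [show List.replicate m0 1 ++ List.replicate (tl.length + n0) 2
          ++ ([1] ++ (Tw tl ++ List.replicate k 2))
        = (List.replicate m0 1 ++ List.replicate (tl.length + n0) 2 ++ [1] ++ Tw tl)
          ++ List.replicate k 2 by simp [List.append_assoc]]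
    exact last_rep2 _ k hk

/-! ### refined decomposition for words ending in 1 -/

lemma fib_decomp' (w : List ℕ) (hf : IsFib w) (hlast : w.getLast? = some 1) :
    ∃ m0 ns, m0 ≤ 1 ∧ (∀ j ∈ ns, 1 ≤ j) ∧ w = Bw m0 ns ∧ 1 ≤ m0 + ns.length := by
  obtain ⟨m0, ns, k, hm, hns, rfl⟩ := fib_decomp w hf
  have hk : k = 0 := by
    by_contra h
    rw [last_rep2 _ k (by omega)] at hlast
    simp at hlast
  subst hk
  rw [List.replicate_zero, List.append_nil] at hlast ⊢
  refine ⟨m0, ns, hm, hns, rfl, ?_⟩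
  by_contra h
  have hm0 : m0 = 0 := by omega
  have hns0 : ns = [] := by
    cases ns with
    | nil => rfl
    | cons a b => simp only [List.length_cons] at h; omega
  subst hm0; subst hns0
  simp [Bw, T2] at hlast

/-! ### injectivity core -/

lemma head_form (m0 a : ℕ) (x : List ℕ) (ha : 1 ≤ a) (hm : m0 ≤ 1) :
    (List.replicate m0 1 ++ List.replicate a 2 ++ x).head? = some (if m0 = 0 then 2 else 1) := by
  obtain ⟨a', rfl⟩ : ∃ a', a = a' + 1 := ⟨a - 1, by omega⟩
  interval_cases m0 <;> simp [List.replicate_succ]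

lemma psi_inj_core (m0 m0' : ℕ) (ns ns' : List ℕ) (hm : m0 ≤ 1) (hm' : m0' ≤ 1)
    (hns : ∀ j ∈ ns, 1 ≤ j) (hns' : ∀ j ∈ ns', 1 ≤ j)
    (hpos : 1 ≤ m0 + ns.length) (hpos' : 1 ≤ m0' + ns'.length)
    (he : Psi (Bw m0 ns) = Psi (Bw m0' ns')) : m0 = m0' ∧ ns = ns' := by
  cases ns with
  | nil =>
    have hm1 : m0 = 1 := by simp at hpos; omega
    subst hm1
    rw [Psi_Bw_nil 1 le_rfl] at he
    cases ns' with
    | nil =>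
      have hm1' : m0' = 1 := by simp at hpos'; omega
      exact ⟨hm1'.symm, rfl⟩
    | cons n0' tl' =>
      exfalso
      rw [Psi_Bw_cons m0' n0' tl' (hns' n0' (by simp)) (fun j hj => hns' j (by simp [hj]))] at he
      have h2 : (2 : ℕ) ∈ List.replicate m0' 1 ++ List.replicate (tl'.length + n0') 2
          ++ ([1] ++ Tw tl') := by
        have : 1 ≤ tl'.length + n0' := by have := hns' n0' (by simp); omega
        obtain ⟨a', ha'⟩ : ∃ a', tl'.length + n0' = a' + 1 := ⟨tl'.length + n0' - 1, by omega⟩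
        rw [ha']
        simp [List.replicate_succ]
      rw [← he] at h2
      have := List.eq_of_mem_replicate h2
      omega
  | cons n0 tl =>
    cases ns' with
    | nil =>
      exfalso
      have hm1' : m0' = 1 := by simp at hpos'; omega
      subst hm1'
      rw [Psi_Bw_nil 1 le_rfl] at he
      rw [Psi_Bw_cons m0 n0 tl (hns n0 (by simp)) (fun j hj => hns j (by simp [hj]))] at he
      have h2 : (2 : ℕ) ∈ List.replicate m0 1 ++ List.replicate (tl.length + n0) 2
          ++ ([1] ++ Tw tl) := by
        have : 1 ≤ tl.length + n0 := by have := hns n0 (by simp); omega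
        obtain ⟨a', ha'⟩ : ∃ a', tl.length + n0 = a' + 1 := ⟨tl.length + n0 - 1, by omega⟩
        rw [ha']
        simp [List.replicate_succ]
      rw [he] at h2
      have := List.eq_of_mem_replicate h2
      omega
    | cons n0' tl' =>
      rw [Psi_Bw_cons m0 n0 tl (hns n0 (by simp)) (fun j hj => hns j (by simp [hj])),
        Psi_Bw_cons m0' n0' tl' (hns' n0' (by simp)) (fun j hj => hns' j (by simp [hj]))] at he
      have hA : 1 ≤ tl.length + n0 := by have := hns n0 (by simp); omega
      have hA' : 1 ≤ tl'.length + n0' := by have := hns' n0' (by simp); omega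
      have hmm : m0 = m0' := by
        have hh := congrArg List.head? he
        rw [head_form m0 _ _ hA hm, head_form m0' _ _ hA' hm'] at hh
        simp only [Option.some.injEq] at hh
        split_ifs at hh with h1 h2 h2 <;> omega
      subst hmm
      rw [List.append_assoc, List.append_assoc] at he
      have he2 := List.append_cancel_left he
      have h1 := leadCount_rep 2 (tl.length + n0) ([1] ++ Tw tl) (by simp)
      have h2 := leadCount_rep 2 (tl'.length + n0') ([1] ++ Tw tl') (by simp)
      rw [he2, h2] at h1
      have eA : tl'.length + n0' = tl.length + n0 := congrArg Prod.fst h1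
      have eT : Tw tl = Tw tl' := by
        have := congrArg Prod.snd h1
        simpa using this.symm
      have htt : tl = tl' :=
        Tw_inj tl tl' (fun j hj => hns j (by simp [hj])) (fun j hj => hns' j (by simp [hj])) eT
      subst htt
      have : n0 = n0' := by omega
      subst this
      exact ⟨rfl, rfl⟩

end Stmt9Aux

theorem stmt_9 (n : ℕ) :
    Set.InjOn Psi (FibSet' n) ∧
      Psi '' FibSet' n = {w ∈ Psi '' FibSet n | w.getLast? = some 1} := by
  constructor
  · rintro w ⟨hf, hlen, hlast⟩ w' ⟨hf', hlen', hlast'⟩ he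
    obtain ⟨m0, ns, hm, hns, hw, hpos⟩ := Stmt9Aux.fib_decomp' w hf hlast
    obtain ⟨m0', ns', hm', hns', hw', hpos'⟩ := Stmt9Aux.fib_decomp' w' hf' hlast'
    subst hw; subst hw'
    obtain ⟨h1, h2⟩ := Stmt9Aux.psi_inj_core m0 m0' ns ns' hm hm' hns hns' hpos hpos' he
    rw [h1, h2]
  · ext u
    constructor
    · rintro ⟨w, ⟨hf, hlen, hlast⟩, rfl⟩
      refine ⟨⟨w, ⟨hf, hlen⟩, rfl⟩, ?_⟩
      obtain ⟨m0, ns, hm, hns, rfl, hpos⟩ := Stmt9Aux.fib_decomp' w hf hlast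
      exact Stmt9Aux.psi_last_one m0 ns hm hns hpos
    · rintro ⟨⟨w, ⟨hf, hlen⟩, rfl⟩, hlast⟩
      refine ⟨w, ⟨hf, hlen, ?_⟩, rfl⟩
      obtain ⟨m0, ns, k, hm, hns, rfl⟩ := Stmt9Aux.fib_decomp w hf
      have hk : k = 0 := by
        by_contra h
        rw [Stmt9Aux.psi_last_two m0 ns k hm hns (by omega)] at hlast
        simp at hlast
      subst hk
      rw [List.replicate_zero, List.append_nil] at hlast ⊢
      by_cases hpos : 1 ≤ m0 + ns.length
      · cases ns with
        | nil =>
          have hm1 : m0 = 1 := by simp at hpos; omega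
          subst hm1
          rfl
        | cons n0 tl => exact Stmt9Aux.last_Bw_cons m0 n0 tl
      · exfalso
        have hm0 : m0 = 0 := by omega
        have hns0 : ns = [] := by
          cases ns with
          | nil => rfl
          | cons a b => simp only [List.length_cons] at hpos; omega
        subst hm0; subst hns0
        rw [show Stmt9Aux.Bw 0 [] = ([] : List ℕ) from rfl, Stmt9Aux.Psi_nil] at hlast
        simp at hlast
end

section
/- Let Γ be the map on binary words given by Γ(1^{m_0} 2^{n_0} ⋯ 1^{m_d} 2^{n_d}) = 1^{m_0} 2 1^{m_1−1} ⋯ 2 1^{m_{d−1}−1} 2 1^{m_d} 2^{n_0−1} 1 2^{n_1−1} ⋯ 2^{n_{d−2}−1} 1 2^{n_{d−1}−1+n_d}. Then Γ restricted to F'_n, the set of Fibonacci words of length n ending with 1, is injective. -/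
/-! ### Auxiliary machinery for injectivity of `Gamma` on `FibSet'` -/

/-- Canonical form of a Fibonacci word ending in 1. -/
def Cword (m0 : ℕ) (ks : List ℕ) : List ℕ :=
  List.replicate m0 1 ++ ks.flatMap (fun k => List.replicate (k+1) 2 ++ [1])

/-- Tail part of `Gamma` of a canonical word. -/
def Tw : List ℕ → List ℕ
  | [] => []
  | k :: ks => 1 :: (List.replicate k 2 ++ Tw ks)

/-- Expected blocks of a canonical word. -/
def bl : ℕ → List ℕ → List (ℕ × ℕ)
  | m0, [] => if m0 = 0 then [] else [(m0, 0)]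
  | m0, k :: ks => (m0, k+1) :: bl 1 ks

lemma leadCount_not_head (a : ℕ) (w : List ℕ) (h : w.head? ≠ some a) :
    leadCount a w = (0, w) := by
  cases w with
  | nil => rfl
  | cons b t =>
    have hb : b ≠ a := by intro hba; exact h (by simp [hba])
    simp [leadCount, hb]

lemma leadCount_replicate_append (a m : ℕ) (w : List ℕ) (h : w.head? ≠ some a) :
    leadCount a (List.replicate m a ++ w) = (m, w) := by
  induction m with
  | zero => simpa using leadCount_not_head a w h
  | succ k ih => simp [List.replicate_succ, leadCount, ih]

lemma blocksAux_succ_cons (fuel b : ℕ) (w : List ℕ) :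
    blocksAux (fuel + 1) (b :: w) =
      ((leadCount 1 (b :: w)).1, (leadCount 2 (leadCount 1 (b :: w)).2).1)
        :: blocksAux fuel (leadCount 2 (leadCount 1 (b :: w)).2).2 := rfl

lemma blocksAux_nil (fuel : ℕ) : blocksAux fuel [] = [] := by
  cases fuel <;> rfl

lemma blocksAux_block (fuel m k : ℕ) (w : List ℕ) (hw : w.head? ≠ some 2) :
    blocksAux (fuel + 1) (List.replicate m 1 ++ List.replicate (k+1) 2 ++ w) =
      (m, k+1) :: blocksAux fuel w := by
  have h2 : leadCount 2 (List.replicate (k+1) 2 ++ w) = (k+1, w) :=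
    leadCount_replicate_append 2 (k+1) w hw
  have h1 : leadCount 1 (List.replicate m 1 ++ (List.replicate (k+1) 2 ++ w))
      = (m, List.replicate (k+1) 2 ++ w) :=
    leadCount_replicate_append 1 m _ (by simp [List.replicate_succ])
  cases m with
  | zero =>
    rw [List.replicate_zero, List.nil_append]
    rw [show List.replicate (k+1) 2 ++ w = 2 :: (List.replicate k 2 ++ w) by
      simp [List.replicate_succ]]
    rw [blocksAux_succ_cons]
    rw [show (2 : ℕ) :: (List.replicate k 2 ++ w) = List.replicate (k+1) 2 ++ w by
      simp [List.replicate_succ]] at *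
    rw [leadCount_not_head 1 _ (by simp [List.replicate_succ]), h2]
  | succ s =>
    rw [List.append_assoc]
    rw [show List.replicate (s+1) 1 ++ (List.replicate (k+1) 2 ++ w)
        = 1 :: (List.replicate s 1 ++ (List.replicate (k+1) 2 ++ w)) by
      simp [List.replicate_succ]]
    rw [blocksAux_succ_cons]
    rw [show (1:ℕ) :: (List.replicate s 1 ++ (List.replicate (k+1) 2 ++ w))
        = List.replicate (s+1) 1 ++ (List.replicate (k+1) 2 ++ w) by
      simp [List.replicate_succ]]
    rw [h1, h2]

lemma Cword_one (ks : List ℕ) : Cword 1 ks = 1 :: Cword 0 ks := by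
  simp [Cword]

lemma Cword_cons (m0 k : ℕ) (ks : List ℕ) :
    Cword m0 (k :: ks) =
      List.replicate m0 1 ++ List.replicate (k+1) 2 ++ Cword 1 ks := by
  simp [Cword, List.append_assoc]

lemma Cword_length_cons (m0 k : ℕ) (ks : List ℕ) :
    (Cword m0 (k :: ks)).length = m0 + (k+1) + (Cword 1 ks).length := by
  rw [Cword_cons]; simp; omega

lemma blocksAux_Cword : ∀ (ks : List ℕ) (m0 fuel : ℕ),
    (Cword m0 ks).length ≤ fuel → blocksAux fuel (Cword m0 ks) = bl m0 ks := by
  intro ks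
  induction ks with
  | nil =>
    intro m0 fuel h
    cases m0 with
    | zero => simp [Cword, blocksAux_nil, bl]
    | succ s =>
      have hlen : (Cword (s+1) []).length = s + 1 := by simp [Cword]
      rw [hlen] at h
      obtain ⟨f, rfl⟩ : ∃ f, fuel = f + 1 := ⟨fuel - 1, by omega⟩
      have : Cword (s+1) [] = 1 :: (List.replicate s 1 ++ []) := by
        simp [Cword, List.replicate_succ]
      rw [this, blocksAux_succ_cons]
      rw [show (1:ℕ) :: (List.replicate s 1 ++ []) = List.replicate (s+1) 1 ++ [] by
        simp [List.replicate_succ]]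
      rw [leadCount_replicate_append 1 (s+1) [] (by simp)]
      simp [leadCount, blocksAux_nil, bl]
  | cons k kr ih =>
    intro m0 fuel h
    rw [Cword_length_cons] at h
    obtain ⟨f, rfl⟩ : ∃ f, fuel = f + 1 := ⟨fuel - 1, by omega⟩
    rw [Cword_cons, blocksAux_block f m0 k _ (by rw [Cword_one]; simp)]
    rw [ih 1 f (by omega)]
    rfl

lemma blocks_Cword (m0 : ℕ) (ks : List ℕ) : blocks (Cword m0 ks) = bl m0 ks :=
  blocksAux_Cword ks m0 _ le_rfl

lemma bl_one_ne_nil (ks : List ℕ) : bl 1 ks ≠ [] := by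
  cases ks <;> simp [bl]

lemma bl_one_getLast? : ∀ (ks : List ℕ), (bl 1 ks).getLast? = some (1, 0) := by
  intro ks
  induction ks with
  | nil => rfl
  | cons k kr ih =>
    obtain ⟨p, l, hl⟩ : ∃ p l, bl 1 kr = p :: l := by cases kr <;> exact ⟨_, _, rfl⟩
    rw [bl, hl, List.getLast?_cons_cons, ← hl, ih]

lemma bl_one_getLast (ks : List ℕ) : (bl 1 ks).getLastD (0,0) = (1, 0) := by
  rw [List.getLastD_eq_getLast?, bl_one_getLast? ks]; rfl

lemma bl_one_dropLast_flat (ks : List ℕ) :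
    (bl 1 ks).dropLast.flatMap (fun p => 2 :: List.replicate (p.1 - 1) 1)
      = List.replicate ks.length 2 := by
  induction ks with
  | nil => rfl
  | cons k kr ih =>
    rw [bl, List.dropLast_cons_of_ne_nil (bl_one_ne_nil kr)]
    simp [List.replicate_succ, ih]

lemma bl_one_map_snd (ks : List ℕ) :
    (bl 1 ks).map Prod.snd = ks.map (· + 1) ++ [0] := by
  induction ks with
  | nil => rfl
  | cons k kr ih => simp [bl, ih]

lemma Tw_eq_flat : ∀ (kr : List ℕ) (k : ℕ),
    (k :: kr).dropLast.flatMap (fun kj => List.replicate kj 2 ++ [1])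
      ++ List.replicate ((k :: kr).getLastD 0) 2
    = List.replicate k 2 ++ Tw kr := by
  intro kr
  induction kr with
  | nil => intro k; simp [Tw]
  | cons k1 t ih =>
    intro k
    have h := ih k1
    rw [Tw, List.dropLast_cons_of_ne_nil (by simp)]
    simp only [List.flatMap_cons, List.getLastD_cons, List.append_assoc] at h ⊢
    rw [h]
    simp

lemma gammaBlocks_cons_cons (m0 n0 : ℕ) (b : ℕ × ℕ) (rest : List (ℕ × ℕ)) :
    gammaBlocks ((m0, n0) :: b :: rest) =
      List.replicate m0 1
        ++ (b :: rest).dropLast.flatMap (fun p => 2 :: List.replicate (p.1 - 1) 1)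
        ++ (2 :: List.replicate ((b :: rest).getLastD (0,0)).1 1)
        ++ (let ns := n0 :: (b :: rest).map Prod.snd
            ns.dropLast.dropLast.flatMap (fun nj => List.replicate (nj - 1) 2 ++ [1])
              ++ List.replicate (ns.dropLast.getLastD 0 - 1 + ns.getLastD 0) 2) := rfl

lemma map_add_one_getLastD : ∀ (t : List ℕ) (b : ℕ),
    ((b :: t).map (· + 1)).getLastD 0 = (b :: t).getLastD 0 + 1 := by
  intro t
  induction t with
  | nil => intro b; rfl
  | cons c t ih =>
    intro b
    simp only [List.map_cons, List.getLastD_cons] at ih ⊢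
    exact ih c

lemma gammaBlocks_bl (m0 : ℕ) (ks : List ℕ) :
    gammaBlocks (bl m0 ks)
      = List.replicate m0 1 ++ List.replicate ks.length 2 ++ Tw ks := by
  cases ks with
  | nil =>
    cases m0 with
    | zero => simp [bl, gammaBlocks, Tw]
    | succ s => simp [bl, gammaBlocks, Tw]
  | cons k kr =>
    obtain ⟨p, l, hl⟩ : ∃ p l, bl 1 kr = p :: l := by cases kr <;> exact ⟨_, _, rfl⟩
    rw [bl, hl, gammaBlocks_cons_cons, ← hl]
    rw [bl_one_dropLast_flat, bl_one_getLast, bl_one_map_snd]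
    have hns : (k+1) :: (kr.map (· + 1) ++ [0]) = ((k :: kr).map (· + 1)) ++ [0] := by
      simp
    simp only [hns]
    rw [List.dropLast_concat]
    have hA : ((k :: kr).map (· + 1) ++ [0]).getLastD 0 = 0 := by
      rw [List.getLastD_eq_getLast?, List.getLast?_concat]
      rfl
    have hB : ((k :: kr).map (· + 1)).getLastD 0 = (k :: kr).getLastD 0 + 1 :=
      map_add_one_getLastD kr k
    rw [hA, hB]
    rw [← List.map_dropLast, List.flatMap_map]
    have hlast : (k :: kr).getLastD 0 + 1 - 1 + 0 = (k :: kr).getLastD 0 := by omega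
    rw [hlast]
    have hsimp : (fun a => List.replicate (a + 1 - 1) 2 ++ [1])
        = (fun a : ℕ => List.replicate a 2 ++ [1]) := by
      funext a; simp
    rw [hsimp]
    rw [show (k :: kr).dropLast.flatMap (fun a => List.replicate a 2 ++ [1])
          ++ List.replicate ((k :: kr).getLastD 0) 2
        = List.replicate k 2 ++ Tw kr from Tw_eq_flat kr k]
    rw [show Tw (k :: kr) = 1 :: (List.replicate k 2 ++ Tw kr) from rfl]
    simp [List.replicate_succ', List.replicate_succ]

lemma Gamma_Cword (m0 : ℕ) (ks : List ℕ) :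
    Gamma (Cword m0 ks)
      = List.replicate m0 1 ++ List.replicate ks.length 2 ++ Tw ks := by
  rw [Gamma, blocks_Cword, gammaBlocks_bl]

lemma Tw_head_ne_two (ks : List ℕ) : (Tw ks).head? ≠ some 2 := by
  cases ks <;> simp [Tw]

lemma Tw_inj : ∀ (ks ks' : List ℕ), ks.length = ks'.length → Tw ks = Tw ks' → ks = ks' := by
  intro ks
  induction ks with
  | nil => intro ks' hl _; cases ks' <;> simp_all
  | cons k kr ih =>
    intro ks' hl ht
    cases ks' with
    | nil => simp at hl
    | cons k' kr' =>
      rw [Tw, Tw] at ht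
      have htl : List.replicate k 2 ++ Tw kr = List.replicate k' 2 ++ Tw kr' := by
        simpa using ht
      have h1 := congrArg (leadCount 2) htl
      rw [leadCount_replicate_append 2 k _ (Tw_head_ne_two kr),
        leadCount_replicate_append 2 k' _ (Tw_head_ne_two kr')] at h1
      have hk : k = k' := congrArg Prod.fst h1
      have htw : Tw kr = Tw kr' := congrArg Prod.snd h1
      rw [hk, ih kr' (by simpa using hl) htw]

lemma Gform_inj (m0 m0' : ℕ) (ks ks' : List ℕ)
    (h : List.replicate m0 1 ++ List.replicate ks.length 2 ++ Tw ks
       = List.replicate m0' 1 ++ List.replicate ks'.length 2 ++ Tw ks') :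
    m0 = m0' ∧ ks = ks' := by
  have hh2 : ∀ (l : List ℕ), (List.replicate l.length 2 ++ Tw l).head? ≠ some 1 := by
    intro l; cases l <;> simp [Tw, List.replicate_succ]
  rw [List.append_assoc, List.append_assoc] at h
  have h1 := congrArg (leadCount 1) h
  rw [leadCount_replicate_append 1 m0 _ (hh2 ks),
    leadCount_replicate_append 1 m0' _ (hh2 ks')] at h1
  have hm : m0 = m0' := congrArg Prod.fst h1
  have h2 := congrArg (leadCount 2) (congrArg Prod.snd h1)
  rw [leadCount_replicate_append 2 ks.length _ (Tw_head_ne_two ks),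
    leadCount_replicate_append 2 ks'.length _ (Tw_head_ne_two ks')] at h2
  have hlen : ks.length = ks'.length := congrArg Prod.fst h2
  have htw : Tw ks = Tw ks' := congrArg Prod.snd h2
  exact ⟨hm, Tw_inj ks ks' hlen htw⟩

lemma fib_canonical : ∀ (w : List ℕ), IsFib w → w.getLast? = some 1 →
    ∃ m0 ks, m0 ≤ 1 ∧ w = Cword m0 ks := by
  intro w
  induction w with
  | nil => intro _ h; simp at h
  | cons a rest ih =>
    intro hf hl
    obtain ⟨hbin, hch⟩ := hf
    cases rest with
    | nil =>
      have : a = 1 := by simpa using hl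
      exact ⟨1, [], le_rfl, by simp [this, Cword]⟩
    | cons b t =>
      have hl' : (b :: t).getLast? = some 1 := by
        rwa [List.getLast?_cons_cons] at hl
      have hf' : IsFib (b :: t) :=
        ⟨fun x hx => hbin x (List.mem_cons_of_mem a hx), hch.tail⟩
      obtain ⟨m0, ks, hm0, hrest⟩ := ih hf' hl'
      have hab : a = 1 ∨ a = 2 := hbin a (by simp)
      cases hab with
      | inl ha =>
        -- b = 2
        have hb12 : b = 1 ∨ b = 2 := hbin b (by simp)
        have hnb : ¬ (a = 1 ∧ b = 1) := (List.isChain_cons_cons.mp hch).1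
        have hb : b = 2 := hb12.resolve_left (fun h => hnb ⟨ha, h⟩)
        -- rest head is 2, so m0 = 0
        have hm0z : m0 = 0 := by
          interval_cases m0
          · rfl
          · exfalso
            rw [Cword_one] at hrest
            have : b = 1 := by
              have := congrArg List.head? hrest
              simpa using this
            omega
        rw [hm0z] at hrest
        refine ⟨1, ks, le_rfl, ?_⟩
        rw [ha, Cword_one, ← hrest]
      | inr ha =>
        cases Nat.le_one_iff_eq_zero_or_eq_one.mp hm0 with
        | inr h1 =>
          refine ⟨0, 0 :: ks, Nat.zero_le 1, ?_⟩
          rw [h1] at hrest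
          rw [ha, hrest, Cword_one]
          simp [Cword, List.replicate_succ]
        | inl h0 =>
          rw [h0] at hrest
          cases ks with
          | nil => simp [Cword] at hrest
          | cons k kr =>
            refine ⟨0, (k+1) :: kr, Nat.zero_le 1, ?_⟩
            rw [ha, hrest, Cword_cons, Cword_cons]
            simp [List.replicate_succ]


theorem stmt_11 (n : ℕ) :
    Set.InjOn Gamma (FibSet' n) := by
  intro w hw w' hw' hg
  obtain ⟨hf, _, hl⟩ := hw
  obtain ⟨hf', _, hl'⟩ := hw'
  obtain ⟨m0, ks, hm0, rfl⟩ := fib_canonical w hf hl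
  obtain ⟨m0', ks', hm0', rfl⟩ := fib_canonical w' hf' hl'
  rw [Gamma_Cword, Gamma_Cword] at hg
  obtain ⟨h1, h2⟩ := Gform_inj m0 m0' ks ks' hg
  rw [h1, h2]
end
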